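/- arXiv:1707.02632 — 2 statements merged into one kernel-verified Lean document; each statement's English description precedes it below -/
import Mathlib

section
/- Let E be a symmetric Banach function space on I=[0,α) with the Fatou property. If x∈E is a point of K-order continuity and an LKM point and x*(∞)=0, then x is an LLUKM point. -/
open MeasureTheory Filter Topology Set
open scoped ENNReal

noncomputable section

/-- Lebesgue measure restricted to the interval `I = [0, α)`, where `α : ℝ≥0∞`. -/
def muI (α : ℝ≥0∞) : Measure ℝ :=
  volume.restrict {s : ℝ | 0 ≤ s ∧ ENNReal.ofReal s < α}

/-- The distribution function `d_x(λ) = μ{s ∈ I : |x(s)| > λ}`. -/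
def distr (α : ℝ≥0∞) (x : ℝ → ℝ) (lam : ℝ) : ℝ≥0∞ :=
  muI α {s : ℝ | lam < |x s|}

/-- The decreasing rearrangement `x*(t) = inf{λ > 0 : d_x(λ) ≤ t}`. -/
def rearr (α : ℝ≥0∞) (x : ℝ → ℝ) (t : ℝ) : ℝ :=
  sInf {lam : ℝ | 0 < lam ∧ distr α x lam ≤ ENNReal.ofReal t}

/-- The maximal function `x**(t) = (1/t) ∫₀ᵗ x*(s) ds`. -/
def maxf (α : ℝ≥0∞) (x : ℝ → ℝ) (t : ℝ) : ℝ :=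
  (∫ s in Set.Ioc (0 : ℝ) t, rearr α x s) / t

/-- The Hardy–Littlewood–Pólya relation `x ≺ y`, i.e. `x**(t) ≤ y**(t)` for all `t > 0`. -/
def HLP (α : ℝ≥0∞) (x y : ℝ → ℝ) : Prop :=
  ∀ t : ℝ, 0 < t → maxf α x t ≤ maxf α y t

/-- `x*(∞) = 0`: automatic when `α ≠ ∞`, and `lim_{t→∞} x*(t) = 0` when `α = ∞`. -/
def rearrInftyZero (α : ℝ≥0∞) (x : ℝ → ℝ) : Prop :=
  α = ∞ → Tendsto (rearr α x) atTop (𝓝 0)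

/-- A symmetric Banach function space on `[0, α)` with the Fatou property. -/
structure SymmetricBFS (α : ℝ≥0∞) where
  /-- membership in the space `E` -/
  Mem : (ℝ → ℝ) → Prop
  /-- the norm of `E` -/
  N : (ℝ → ℝ) → ℝ
  mem_aemeasurable : ∀ ⦃x⦄, Mem x → AEMeasurable x (muI α)
  zero_mem : Mem 0
  add_mem : ∀ ⦃x y⦄, Mem x → Mem y → Mem (x + y)
  smul_mem : ∀ (c : ℝ) ⦃x⦄, Mem x → Mem (c • x)
  norm_nonneg' : ∀ x, 0 ≤ N x
  norm_zero' : N 0 = 0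
  norm_add_le : ∀ x y, N (x + y) ≤ N x + N y
  norm_smul' : ∀ (c : ℝ) (x : ℝ → ℝ), N (c • x) = |c| * N x
  norm_eq_zero_iff : ∀ ⦃x⦄, Mem x → (N x = 0 ↔ (∀ᵐ s ∂(muI α), x s = 0))
  /-- the ideal (Banach function space) property -/
  ideal : ∀ ⦃x y⦄, AEMeasurable x (muI α) → Mem y →
    (∀ᵐ s ∂(muI α), |x s| ≤ |y s|) → Mem x ∧ N x ≤ N y
  /-- there is a strictly positive element -/
  exists_strictPos : ∃ x, Mem x ∧ ∀ᵐ s ∂(muI α), 0 < x s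
  /-- norm completeness -/
  complete : ∀ u : ℕ → ℝ → ℝ, (∀ n, Mem (u n)) →
    (∀ ε : ℝ, 0 < ε → ∃ n₀ : ℕ, ∀ m n, n₀ ≤ m → n₀ ≤ n → N (u m - u n) < ε) →
    ∃ x, Mem x ∧ Tendsto (fun n => N (u n - x)) atTop (𝓝 0)
  /-- symmetry: equimeasurable functions have equal norms -/
  symmetric : ∀ ⦃x y⦄, AEMeasurable x (muI α) → Mem y →
    distr α x = distr α y → Mem x ∧ N x = N y
  /-- the Fatou property -/
  fatou : ∀ (u : ℕ → ℝ → ℝ) (x : ℝ → ℝ), (∀ n, Mem (u n)) →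
    AEMeasurable x (muI α) →
    (∀ n, ∀ᵐ s ∂(muI α), 0 ≤ u n s) →
    (∀ n, ∀ᵐ s ∂(muI α), u n s ≤ u (n + 1) s) →
    (∀ᵐ s ∂(muI α), Tendsto (fun n => u n s) atTop (𝓝 (x s))) →
    (∃ C : ℝ, ∀ n, N (u n) ≤ C) →
    Mem x ∧ Tendsto (fun n => N (u n)) atTop (𝓝 (N x))

variable {α : ℝ≥0∞}

/-- The fundamental function `φ(t) = ‖χ_{(0,t)}‖_E`. -/
def SymmetricBFS.fund (E : SymmetricBFS α) (t : ℝ) : ℝ :=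
  E.N (Set.indicator (Set.Ioo 0 t) fun _ => (1 : ℝ))

/-- `x` is a point of lower local uniform `K`-monotonicity (`LLUKM` point). -/
def SymmetricBFS.IsLLUKMPoint (E : SymmetricBFS α) (x : ℝ → ℝ) : Prop :=
  ∀ u : ℕ → ℝ → ℝ, (∀ n, E.Mem (u n)) → (∀ n, HLP α (u n) x) →
    Tendsto (fun n => E.N (u n)) atTop (𝓝 (E.N x)) →
    Tendsto (fun n => E.N (rearr α (u n) - rearr α x)) atTop (𝓝 0)

/-- `x` is a point of upper local uniform `K`-monotonicity (`ULUKM` point). -/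
def SymmetricBFS.IsULUKMPoint (E : SymmetricBFS α) (x : ℝ → ℝ) : Prop :=
  ∀ u : ℕ → ℝ → ℝ, (∀ n, E.Mem (u n)) → (∀ n, HLP α x (u n)) →
    Tendsto (fun n => E.N (u n)) atTop (𝓝 (E.N x)) →
    Tendsto (fun n => E.N (rearr α x - rearr α (u n))) atTop (𝓝 0)

/-- `x` is a point of lower `K`-monotonicity (`LKM` point). -/
def SymmetricBFS.IsLKMPoint (E : SymmetricBFS α) (x : ℝ → ℝ) : Prop :=
  ∀ y : ℝ → ℝ, E.Mem y → HLP α y x → rearr α y ≠ rearr α x → E.N y < E.N x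

/-- `x` is a point of order continuity. -/
def SymmetricBFS.IsOCPoint (E : SymmetricBFS α) (x : ℝ → ℝ) : Prop :=
  ∀ u : ℕ → ℝ → ℝ, (∀ n, E.Mem (u n)) →
    (∀ n, ∀ᵐ s ∂(muI α), 0 ≤ u n s ∧ u n s ≤ |x s|) →
    (∀ᵐ s ∂(muI α), Tendsto (fun n => u n s) atTop (𝓝 0)) →
    Tendsto (fun n => E.N (u n)) atTop (𝓝 0)

/-- `x` is a point of `K`-order continuity. -/
def SymmetricBFS.IsKOCPoint (E : SymmetricBFS α) (x : ℝ → ℝ) : Prop :=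
  ∀ u : ℕ → ℝ → ℝ, (∀ n, E.Mem (u n)) → (∀ n, HLP α (u n) x) →
    (∀ᵐ s ∂(muI α), Tendsto (fun n => rearr α (u n) s) atTop (𝓝 0)) →
    Tendsto (fun n => E.N (u n)) atTop (𝓝 0)

/-- `x` is an `H_g` point (Kadec–Klee point for global convergence in measure). -/
def SymmetricBFS.IsHgPoint (E : SymmetricBFS α) (x : ℝ → ℝ) : Prop :=
  ∀ u : ℕ → ℝ → ℝ, (∀ n, E.Mem (u n)) →
    TendstoInMeasure (muI α) u atTop x →
    Tendsto (fun n => E.N (u n)) atTop (𝓝 (E.N x)) →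
    Tendsto (fun n => E.N (u n - x)) atTop (𝓝 0)

/-- `x` is an `H_l` point (Kadec–Klee point for local convergence in measure). -/
def SymmetricBFS.IsHlPoint (E : SymmetricBFS α) (x : ℝ → ℝ) : Prop :=
  ∀ u : ℕ → ℝ → ℝ, (∀ n, E.Mem (u n)) →
    (∀ A : Set ℝ, muI α A < ∞ → TendstoInMeasure ((muI α).restrict A) u atTop x) →
    Tendsto (fun n => E.N (u n)) atTop (𝓝 (E.N x)) →
    Tendsto (fun n => E.N (u n - x)) atTop (𝓝 0)

/-- A nonnegative `x` is an `LLUM` point (point of lower local uniform monotonicity). -/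
def SymmetricBFS.IsLLUMPoint (E : SymmetricBFS α) (x : ℝ → ℝ) : Prop :=
  ∀ u : ℕ → ℝ → ℝ, (∀ n, E.Mem (u n)) →
    (∀ n, ∀ᵐ s ∂(muI α), 0 ≤ u n s ∧ u n s ≤ x s) →
    Tendsto (fun n => E.N (u n)) atTop (𝓝 (E.N x)) →
    Tendsto (fun n => E.N (u n - x)) atTop (𝓝 0)

/-- A nonnegative `x` is a `ULUM` point (point of upper local uniform monotonicity). -/
def SymmetricBFS.IsULUMPoint (E : SymmetricBFS α) (x : ℝ → ℝ) : Prop :=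
  ∀ u : ℕ → ℝ → ℝ, (∀ n, E.Mem (u n)) →
    (∀ n, ∀ᵐ s ∂(muI α), x s ≤ u n s) →
    Tendsto (fun n => E.N (u n)) atTop (𝓝 (E.N x)) →
    Tendsto (fun n => E.N (u n - x)) atTop (𝓝 0)

namespace KPf

variable {α : ℝ≥0∞} {y z : ℝ → ℝ}

def Iset (α : ℝ≥0∞) : Set ℝ := {s : ℝ | 0 ≤ s ∧ ENNReal.ofReal s < α}

lemma Iset_meas : MeasurableSet (Iset α) := by
  have : Iset α = Set.Ici (0:ℝ) ∩ (ENNReal.ofReal ⁻¹' Set.Iio α) := by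
    ext s; simp [Iset, Set.mem_setOf_eq, and_comm]
  rw [this]
  exact measurableSet_Ici.inter (ENNReal.measurable_ofReal measurableSet_Iio)

lemma muI_apply (s : Set ℝ) : muI α s = volume (s ∩ Iset α) :=
  Measure.restrict_apply' Iset_meas

lemma vol_Iset (hα : α = 1 ∨ α = ∞) : volume (Iset α) = α := by
  rcases hα with h | h <;> subst h
  · have : Iset 1 = Set.Ico (0:ℝ) 1 := by
      ext s
      simp only [Iset, Set.mem_setOf_eq, Set.mem_Ico]
      constructor
      · rintro ⟨h0, h1⟩
        exact ⟨h0, by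
          by_contra hs
          push_neg at hs
          have : (1:ℝ≥0∞) ≤ ENNReal.ofReal s := by
            simpa using ENNReal.ofReal_le_ofReal hs
          exact absurd h1 (not_lt.2 this)⟩
      · rintro ⟨h0, h1⟩
        refine ⟨h0, ?_⟩
        calc ENNReal.ofReal s < ENNReal.ofReal 1 := by
              exact (ENNReal.ofReal_lt_ofReal_iff one_pos).2 h1
          _ = 1 := by simp
    rw [this, Real.volume_Ico]; simp
  · have : Iset ∞ = Set.Ici (0:ℝ) := by
      ext s; simp [Iset]
    rw [this, Real.volume_Ici]

lemma muI_univ (hα : α = 1 ∨ α = ∞) : muI α Set.univ = α := by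
  rw [muI_apply, Set.univ_inter, vol_Iset hα]

lemma distr_le_univ (y : ℝ → ℝ) (lam : ℝ) : distr α y lam ≤ muI α Set.univ :=
  measure_mono (Set.subset_univ _)

lemma distr_le_alpha (hα : α = 1 ∨ α = ∞) (y : ℝ → ℝ) (lam : ℝ) :
    distr α y lam ≤ α := by
  calc distr α y lam ≤ muI α Set.univ := distr_le_univ y lam
    _ = α := muI_univ hα

lemma distr_anti (y : ℝ → ℝ) : Antitone (distr α y) := by
  intro a b hab
  exact measure_mono (fun s hs => lt_of_le_of_lt hab hs)

lemma distr_congr (h : y =ᵐ[muI α] z) : distr α y = distr α z := by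
  funext lam
  apply measure_congr
  filter_upwards [h] with s hs
  exact congrArg (fun v : ℝ => (lam < |v| : Prop)) hs

lemma distr_mono_fn (h : ∀ᵐ s ∂(muI α), |y s| ≤ |z s|) (lam : ℝ) :
    distr α y lam ≤ distr α z lam := by
  apply measure_mono_ae
  filter_upwards [h] with s hs hmem
  exact lt_of_lt_of_le hmem hs

lemma distr_neg_lam (y : ℝ → ℝ) {lam : ℝ} (h : lam < 0) :
    distr α y lam = muI α Set.univ := by
  unfold distr
  congr 1
  ext s
  simp only [Set.mem_setOf_eq, Set.mem_univ, iff_true]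
  exact lt_of_lt_of_le h (abs_nonneg _)

/-- right continuity of the distribution function -/
lemma distr_le_of_forall_lt {c : ℝ≥0∞} {lam : ℝ}
    (h : ∀ lam', lam < lam' → distr α y lam' ≤ c) : distr α y lam ≤ c := by
  have hset : {s : ℝ | lam < |y s|} = ⋃ n : ℕ, {s : ℝ | lam + (1:ℝ)/(n+1) < |y s|} := by
    ext s
    simp only [Set.mem_setOf_eq, Set.mem_iUnion]
    constructor
    · intro hs
      obtain ⟨n, hn⟩ := exists_nat_one_div_lt (sub_pos.2 hs)
      exact ⟨n, by linarith [hn]⟩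
    · rintro ⟨n, hn⟩
      have : (0:ℝ) < 1/(n+1) := by positivity
      linarith
  have hmono : Monotone (fun n : ℕ => {s : ℝ | lam + (1:ℝ)/(n+1) < |y s|}) := by
    intro m n hmn s hs
    simp only [Set.mem_setOf_eq] at hs ⊢
    have hc : (m:ℝ) ≤ n := Nat.cast_le.mpr hmn
    have : (1:ℝ)/(n+1) ≤ 1/(m+1) := by
      apply one_div_le_one_div_of_le (by positivity)
      linarith
    linarith
  have := MeasureTheory.tendsto_measure_iUnion_atTop (μ := muI α) hmono
  unfold distr
  rw [hset]
  refine le_of_tendsto this (Filter.Eventually.of_forall fun n => ?_)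
  refine h _ ?_
  have : (0:ℝ) < 1/(n+1) := by positivity
  linarith

end KPf
namespace KPf

variable {α : ℝ≥0∞} {y z : ℝ → ℝ}

/-- the set whose infimum defines `rearr` -/
def Sset (α : ℝ≥0∞) (y : ℝ → ℝ) (t : ℝ) : Set ℝ :=
  {lam : ℝ | 0 < lam ∧ distr α y lam ≤ ENNReal.ofReal t}

lemma rearr_eq_sInf (y : ℝ → ℝ) (t : ℝ) : rearr α y t = sInf (Sset α y t) := rfl

lemma Sset_bddBelow (t : ℝ) : BddBelow (Sset α y t) :=
  ⟨0, fun l hl => hl.1.le⟩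

lemma rearr_nonneg (y : ℝ → ℝ) (t : ℝ) : 0 ≤ rearr α y t :=
  Real.sInf_nonneg (fun _ hl => hl.1.le)

lemma rearr_le_of_distr_le {lam t : ℝ} (h1 : 0 < lam)
    (h2 : distr α y lam ≤ ENNReal.ofReal t) : rearr α y t ≤ lam :=
  csInf_le (Sset_bddBelow t) ⟨h1, h2⟩

/-- `y` has no junk: for each `t > 0` some level has distribution below `t`. -/
def NoJunk (α : ℝ≥0∞) (y : ℝ → ℝ) : Prop :=
  ∀ t : ℝ, 0 < t → (Sset α y t).Nonempty

lemma distr_le_of_rearr_le (hnj : NoJunk α y) {t lam : ℝ} (ht : 0 < t) (hlam : 0 < lam)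
    (h : rearr α y t ≤ lam) : distr α y lam ≤ ENNReal.ofReal t := by
  apply distr_le_of_forall_lt
  intro lam' hlam'
  have : sInf (Sset α y t) < lam' := lt_of_le_of_lt h hlam'
  obtain ⟨l, hl, hll⟩ := exists_lt_of_csInf_lt (hnj t ht) this
  exact le_trans (distr_anti y hll.le) hl.2

lemma rearr_le_iff (hnj : NoJunk α y) {t lam : ℝ} (ht : 0 < t) (hlam : 0 < lam) :
    rearr α y t ≤ lam ↔ distr α y lam ≤ ENNReal.ofReal t :=
  ⟨distr_le_of_rearr_le hnj ht hlam, rearr_le_of_distr_le hlam⟩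

lemma lt_rearr_iff (hnj : NoJunk α y) {t lam : ℝ} (ht : 0 < t) (hlam : 0 < lam) :
    lam < rearr α y t ↔ ENNReal.ofReal t < distr α y lam := by
  rw [← not_le, ← not_le, rearr_le_iff hnj ht hlam]

lemma rearr_antitoneOn (hnj : NoJunk α y) : AntitoneOn (rearr α y) (Set.Ioi 0) := by
  intro t ht t' ht' htt'
  rw [rearr_eq_sInf, rearr_eq_sInf]
  apply csInf_le_csInf (Sset_bddBelow t') (hnj t ht)
  intro l hl
  exact ⟨hl.1, le_trans hl.2 (ENNReal.ofReal_le_ofReal htt')⟩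

lemma rearr_const_nonpos (y : ℝ → ℝ) {t : ℝ} (ht : t ≤ 0) : rearr α y t = rearr α y 0 := by
  rw [rearr_eq_sInf, rearr_eq_sInf]
  congr 1
  unfold Sset
  rw [ENNReal.ofReal_of_nonpos ht, ENNReal.ofReal_zero]

lemma rearr_mono_fn (h : ∀ᵐ s ∂(muI α), |y s| ≤ |z s|) (hnjz : NoJunk α z)
    {t : ℝ} (ht : 0 < t) : rearr α y t ≤ rearr α z t := by
  rw [rearr_eq_sInf, rearr_eq_sInf]
  apply csInf_le_csInf (Sset_bddBelow t) (hnjz t ht)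
  intro l hl
  exact ⟨hl.1, le_trans (distr_mono_fn h l) hl.2⟩

/-- measurability of a function constant on `Iic 0` and antitone on `Ioi 0` -/
lemma measurable_of_antitoneOn {f : ℝ → ℝ} (h1 : AntitoneOn f (Set.Ioi 0))
    (h2 : ∀ t : ℝ, t ≤ 0 → f t = f 0) : Measurable f := by
  apply measurable_of_Iio
  intro c
  have : f ⁻¹' Set.Iio c =
      ({t : ℝ | t ≤ 0 ∧ f 0 < c} ∪ {t : ℝ | 0 < t ∧ f t < c}) := by
    ext t
    simp only [Set.mem_preimage, Set.mem_Iio, Set.mem_union, Set.mem_setOf_eq]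
    constructor
    · intro hf
      rcases le_or_gt t 0 with h | h
      · exact Or.inl ⟨h, by rw [← h2 t h]; exact hf⟩
      · exact Or.inr ⟨h, hf⟩
    · rintro (⟨h, hf⟩ | ⟨h, hf⟩)
      · rw [h2 t h]; exact hf
      · exact hf
  rw [this]
  apply MeasurableSet.union
  · by_cases hc : f 0 < c
    · have : {t : ℝ | t ≤ 0 ∧ f 0 < c} = Set.Iic 0 := by
        ext t; simp [hc]
      rw [this]; exact measurableSet_Iic
    · have : {t : ℝ | t ≤ 0 ∧ f 0 < c} = ∅ := by
        ext t; simp [hc]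
      rw [this]; exact MeasurableSet.empty
  · apply Set.OrdConnected.measurableSet
    constructor
    intro a ha b hb u hu
    simp only [Set.mem_setOf_eq] at ha hb ⊢
    rcases hu with ⟨hau, hub⟩
    refine ⟨lt_of_lt_of_le ha.1 hau, ?_⟩
    calc f u ≤ f a := h1 (Set.mem_Ioi.2 ha.1) (Set.mem_Ioi.2 (lt_of_lt_of_le ha.1 hau)) hau
      _ < c := ha.2

lemma measurable_rearr (hnj : NoJunk α y) : Measurable (rearr α y) :=
  measurable_of_antitoneOn (rearr_antitoneOn hnj) (fun _ ht => rearr_const_nonpos y ht)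

end KPf
namespace KPf
open scoped Pointwise

variable {α : ℝ≥0∞} {y z : ℝ → ℝ}

lemma distr_smul {c : ℝ} (hc : 0 < c) (y : ℝ → ℝ) (lam : ℝ) :
    distr α (c • y) lam = distr α y (lam / c) := by
  unfold distr
  congr 1
  ext s
  simp only [Set.mem_setOf_eq, Pi.smul_apply, smul_eq_mul, abs_mul, abs_of_pos hc]
  rw [div_lt_iff₀' hc]

lemma rearr_smul {c : ℝ} (hc : 0 < c) (y : ℝ → ℝ) (t : ℝ) :
    rearr α (c • y) t = c * rearr α y t := by
  rw [rearr_eq_sInf, rearr_eq_sInf]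
  have hset : Sset α (c • y) t = c • (Sset α y t) := by
    ext l
    simp only [Sset, Set.mem_setOf_eq, Set.mem_smul_set]
    constructor
    · rintro ⟨hl, hd⟩
      refine ⟨l / c, ⟨by positivity, ?_⟩, by rw [smul_eq_mul]; field_simp⟩
      rw [distr_smul hc] at hd; exact hd
    · rintro ⟨m, ⟨hm, hd⟩, rfl⟩
      refine ⟨by positivity, ?_⟩
      rw [distr_smul hc, smul_eq_mul]
      rw [show c * m / c = m by field_simp]
      exact hd
  rw [hset, Real.sInf_smul_of_nonneg hc.le, smul_eq_mul]

lemma exists_distr_lt_top (hα : α = 1 ∨ α = ∞) (E : SymmetricBFS α) (hy : E.Mem y) :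
    ∃ lam : ℝ, 0 < lam ∧ distr α y lam < ∞ := by
  rcases hα with h1 | h1
  · refine ⟨1, one_pos, lt_of_le_of_lt (distr_le_alpha (Or.inl h1) y 1) ?_⟩
    rw [h1]; exact ENNReal.one_lt_top
  by_contra hcon
  push_neg at hcon
  have hcon' : ∀ lam : ℝ, 0 < lam → distr α y lam = ∞ :=
    fun lam hlam => top_le_iff.1 (hcon lam hlam)
  have hmeas := E.mem_aemeasurable hy
  set y' := hmeas.mk y with hy'def
  have hyy' : y =ᵐ[muI α] y' := hmeas.ae_eq_mk
  have hdeq : distr α y = distr α y' := distr_congr hyy'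
  set B : ℕ → Set ℝ := fun n => {s | ((n:ℝ)+1) < |y' s|} with hBdef
  have hBmeas : ∀ n, MeasurableSet (B n) :=
    fun n => measurableSet_lt measurable_const hmeas.measurable_mk.abs
  have hBinf : ∀ n, muI α (B n) = ∞ := by
    intro n
    have h2 := hcon' ((n:ℝ)+1) (by positivity)
    rw [hdeq] at h2
    exact h2
  set χ : ℕ → ℝ → ℝ := fun n => (B n).indicator (fun _ => (1:ℝ)) with hχdef
  have hχmeas : ∀ n, Measurable (χ n) := fun n => measurable_const.indicator (hBmeas n)
  have hχmem : ∀ n, E.Mem (χ n) := by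
    intro n
    refine (E.ideal (hχmeas n).aemeasurable (E.smul_mem ((1:ℝ)/((n:ℝ)+1)) hy) ?_).1
    filter_upwards [hyy'] with s hs
    by_cases hb : s ∈ B n
    · have h1 : χ n s = 1 := Set.indicator_of_mem hb _
      have h2 : ((n:ℝ)+1) < |y s| := by rw [hs]; exact hb
      rw [h1]
      simp only [Pi.smul_apply, smul_eq_mul, abs_mul]
      rw [abs_of_pos (by positivity : (0:ℝ) < 1/((n:ℝ)+1))]
      rw [abs_one]
      rw [one_div, inv_mul_eq_div, le_div_iff₀ (by positivity : (0:ℝ) < (n:ℝ)+1)]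
      linarith
    · have h1 : χ n s = 0 := Set.indicator_of_notMem hb _
      rw [h1]; simp only [abs_zero]; exact abs_nonneg _
  have hdχ : ∀ n, distr α (χ n) = distr α (χ 0) := by
    intro n
    have key : ∀ m : ℕ, ∀ lam : ℝ, distr α (χ m) lam =
        (if lam < 0 then muI α Set.univ else if lam < 1 then ∞ else 0) := by
      intro m lam
      split_ifs with h0 h1
      · exact distr_neg_lam _ h0
      · push_neg at h0
        have : {s : ℝ | lam < |χ m s|} = B m := by
          ext s
          simp only [Set.mem_setOf_eq]
          by_cases hb : s ∈ B m
          · simp only [hb, iff_true, hχdef, Set.indicator_of_mem hb]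
            rw [abs_of_nonneg (zero_le_one)]; exact h1
          · simp only [hb, iff_false, not_lt, hχdef, Set.indicator_of_notMem hb]
            rw [abs_zero]; exact h0
        unfold distr; rw [this]; exact hBinf m
      · push_neg at h0 h1
        have : {s : ℝ | lam < |χ m s|} = ∅ := by
          ext s
          simp only [Set.mem_setOf_eq, Set.mem_empty_iff_false, iff_false, not_lt]
          by_cases hb : s ∈ B m
          · rw [hχdef]; simp only [Set.indicator_of_mem hb]
            rw [abs_of_nonneg (zero_le_one)]; exact h1
          · rw [hχdef]; simp only [Set.indicator_of_notMem hb]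
            rw [abs_zero]; linarith
        unfold distr; rw [this]; exact measure_empty
    funext lam; rw [key n lam, key 0 lam]
  have hNeq : ∀ n, E.N (χ n) = E.N (χ 0) :=
    fun n => (E.symmetric (hχmeas n).aemeasurable (hχmem 0) (hdχ n)).2
  have hscale : ∀ n : ℕ, ((n:ℝ)+1) * E.N (χ 0) ≤ E.N y := by
    intro n
    have hb : ∀ᵐ s ∂(muI α), |((((n:ℝ)+1)) • (χ n)) s| ≤ |y s| := by
      filter_upwards [hyy'] with s hs
      by_cases hbb : s ∈ B n
      · have h1 : χ n s = 1 := Set.indicator_of_mem hbb _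
        simp only [Pi.smul_apply, smul_eq_mul, h1, mul_one]
        rw [abs_of_pos (by positivity : (0:ℝ) < (n:ℝ)+1), hs]
        exact le_of_lt hbb
      · have h1 : χ n s = 0 := Set.indicator_of_notMem hbb _
        simp [h1, abs_nonneg]
    have h2 := (E.ideal ((hχmeas n).aemeasurable.const_smul (((n:ℝ)+1))) hy hb).2
    rw [E.norm_smul', abs_of_pos (by positivity : (0:ℝ) < (n:ℝ)+1)] at h2
    rw [hNeq n] at h2
    exact h2
  have hc0 : E.N (χ 0) = 0 := by
    by_contra hne
    have hpos : 0 < E.N (χ 0) := lt_of_le_of_ne (E.norm_nonneg' _) (Ne.symm hne)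
    obtain ⟨n, hn⟩ := exists_nat_gt (E.N y / E.N (χ 0))
    have h3 := hscale n
    rw [div_lt_iff₀ hpos] at hn
    nlinarith [hpos]
  have hzero := (E.norm_eq_zero_iff (hχmem 0)).1 hc0
  have hB0 : muI α (B 0) = 0 := by
    have hnull : muI α {s : ℝ | ¬ χ 0 s = 0} = 0 := MeasureTheory.ae_iff.1 hzero
    refine measure_mono_null ?_ hnull
    intro s hs
    simp only [Set.mem_setOf_eq]
    rw [hχdef]
    simp only [Set.indicator_of_mem hs]
    exact one_ne_zero
  rw [hBinf 0] at hB0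
  exact ENNReal.top_ne_zero hB0

lemma noJunk_of_mem (hα : α = 1 ∨ α = ∞) (E : SymmetricBFS α) (hy : E.Mem y) :
    NoJunk α y := by
  intro t ht
  obtain ⟨lam₀, hlam₀, hfin⟩ := exists_distr_lt_top hα E hy
  have hmeas := E.mem_aemeasurable hy
  set y' := hmeas.mk y with hy'def
  have hyy' : y =ᵐ[muI α] y' := hmeas.ae_eq_mk
  have hdeq : distr α y = distr α y' := distr_congr hyy'
  set S : ℕ → Set ℝ := fun n => {s | lam₀ + n < |y' s|} with hSdef
  have hSmeas : ∀ n, MeasurableSet (S n) :=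
    fun n => measurableSet_lt measurable_const hmeas.measurable_mk.abs
  have hSanti : Antitone S := by
    intro m n hmn s hs
    simp only [hSdef, Set.mem_setOf_eq] at hs ⊢
    have : (m:ℝ) ≤ n := Nat.cast_le.mpr hmn
    linarith
  have hSempty : (⋂ n, S n) = ∅ := by
    ext s
    simp only [Set.mem_iInter, hSdef, Set.mem_setOf_eq, Set.mem_empty_iff_false, iff_false]
    push_neg
    obtain ⟨n, hn⟩ := exists_nat_gt (|y' s| - lam₀)
    exact ⟨n, by linarith⟩
  have hfin0 : muI α (S 0) ≠ ∞ := by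
    have : muI α (S 0) ≤ distr α y lam₀ := by
      rw [hdeq]
      apply measure_mono
      intro s hs
      simp only [hSdef, Set.mem_setOf_eq] at hs ⊢
      simpa using hs
    exact ne_of_lt (lt_of_le_of_lt this hfin)
  have htend := MeasureTheory.tendsto_measure_iInter_atTop (μ := muI α)
    (fun n => (hSmeas n).nullMeasurableSet) hSanti ⟨0, hfin0⟩
  rw [hSempty, measure_empty] at htend
  have hpos : (0:ℝ≥0∞) < ENNReal.ofReal t := ENNReal.ofReal_pos.2 ht
  have hev : ∀ᶠ n in atTop, muI α (S n) < ENNReal.ofReal t :=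
    htend.eventually_lt_const hpos
  obtain ⟨n, hn⟩ := hev.exists
  refine ⟨lam₀ + n, by positivity, ?_⟩
  rw [hdeq]
  exact le_of_lt hn

end KPf
namespace KPf

variable {α : ℝ≥0∞} {y z : ℝ → ℝ}

lemma vol_J (D : ℝ≥0∞) : volume {s : ℝ | 0 < s ∧ ENNReal.ofReal s < D} = D := by
  by_cases hD : D = ∞
  · subst hD
    have : {s : ℝ | 0 < s ∧ ENNReal.ofReal s < ∞} = Set.Ioi 0 := by
      ext s; simp [ENNReal.ofReal_lt_top]
    rw [this, Real.volume_Ioi]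
  · have : {s : ℝ | 0 < s ∧ ENNReal.ofReal s < D} = Set.Ioo 0 D.toReal := by
      ext s
      simp only [Set.mem_setOf_eq, Set.mem_Ioo]
      constructor
      · rintro ⟨h1, h2⟩
        exact ⟨h1, (ENNReal.ofReal_lt_iff_lt_toReal h1.le hD).1 h2⟩
      · rintro ⟨h1, h2⟩
        exact ⟨h1, (ENNReal.ofReal_lt_iff_lt_toReal h1.le hD).2 h2⟩
    rw [this, Real.volume_Ioo, sub_zero, ENNReal.ofReal_toReal hD]

lemma muI_eq_vol_pos (T : Set ℝ) :
    muI α T = volume (T ∩ Iset α ∩ Set.Ioi 0) := by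
  rw [muI_apply]
  apply le_antisymm
  · have hsub : T ∩ Iset α ⊆ (T ∩ Iset α ∩ Set.Ioi 0) ∪ {0} := by
      rintro s ⟨hT, hI⟩
      rcases eq_or_lt_of_le hI.1 with h | h
      · exact Or.inr (by simp [← h])
      · exact Or.inl ⟨⟨hT, hI⟩, h⟩
    calc volume (T ∩ Iset α) ≤ volume ((T ∩ Iset α ∩ Set.Ioi 0) ∪ {0}) := measure_mono hsub
      _ ≤ volume (T ∩ Iset α ∩ Set.Ioi 0) + volume ({0} : Set ℝ) := measure_union_le _ _
      _ = volume (T ∩ Iset α ∩ Set.Ioi 0) := by rw [Real.volume_singleton, add_zero]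
  · exact measure_mono Set.inter_subset_left

lemma distr_rearr (hα : α = 1 ∨ α = ∞) (hnj : NoJunk α y) :
    distr α (rearr α y) = distr α y := by
  funext lam
  rcases lt_or_ge lam 0 with hneg | hpos
  · rw [distr_neg_lam _ hneg, distr_neg_lam _ hneg]
  have habs : {s : ℝ | lam < |rearr α y s|} = {s : ℝ | lam < rearr α y s} := by
    ext s; rw [Set.mem_setOf_eq, Set.mem_setOf_eq, abs_of_nonneg (rearr_nonneg y s)]
  rcases eq_or_lt_of_le hpos with h0 | hlampos
  · -- lam = 0
    subst h0
    unfold distr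
    rw [habs, muI_eq_vol_pos]
    have hseteq : {s : ℝ | 0 < rearr α y s} ∩ Iset α ∩ Set.Ioi 0 =
        ⋃ n : ℕ, ({s : ℝ | 0 < s ∧ ENNReal.ofReal s < distr α y ((1:ℝ)/(n+1))} ∩ Iset α ∩ Set.Ioi 0) := by
      ext s
      simp only [Set.mem_inter_iff, Set.mem_iUnion, Set.mem_setOf_eq, Set.mem_Ioi]
      constructor
      · rintro ⟨⟨hr, hI⟩, hs⟩
        obtain ⟨n, hn⟩ := exists_nat_one_div_lt hr
        have := (lt_rearr_iff hnj hs (by positivity : (0:ℝ) < 1/(n+1))).1 hn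
        exact ⟨n, ⟨⟨hs, this⟩, hI⟩, hs⟩
      · rintro ⟨n, ⟨⟨_, hs2⟩, hI⟩, hs⟩
        have := (lt_rearr_iff hnj hs (by positivity : (0:ℝ) < 1/(n+1))).2 hs2
        refine ⟨⟨lt_trans (by positivity) this, hI⟩, hs⟩
    rw [hseteq]
    have hJsub : ∀ n : ℕ,
        {s : ℝ | 0 < s ∧ ENNReal.ofReal s < distr α y ((1:ℝ)/(n+1))} ∩ Iset α ∩ Set.Ioi 0 =
        {s : ℝ | 0 < s ∧ ENNReal.ofReal s < distr α y ((1:ℝ)/(n+1))} := by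
      intro n
      rw [Set.inter_eq_self_of_subset_left, Set.inter_eq_self_of_subset_left]
      · intro s hs
        exact ⟨hs.1.le, lt_of_lt_of_le hs.2 (distr_le_alpha hα y _)⟩
      · intro s hs
        exact hs.1.1
    simp only [hJsub]
    have hmono : Monotone (fun n : ℕ =>
        {s : ℝ | 0 < s ∧ ENNReal.ofReal s < distr α y ((1:ℝ)/(n+1))}) := by
      intro m n hmn s hs
      refine ⟨hs.1, lt_of_lt_of_le hs.2 (distr_anti y ?_)⟩
      have hc : (m:ℝ) ≤ n := Nat.cast_le.mpr hmn
      apply one_div_le_one_div_of_le (by positivity)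
      linarith
    have h1 := MeasureTheory.tendsto_measure_iUnion_atTop (μ := volume) hmono
    have hcomp1 : (⇑(volume : Measure ℝ) ∘ fun n : ℕ =>
        {s : ℝ | 0 < s ∧ ENNReal.ofReal s < distr α y ((1:ℝ)/(n+1))}) =
        fun n : ℕ => distr α y ((1:ℝ)/(n+1)) := funext fun n => vol_J _
    rw [hcomp1] at h1
    -- RHS
    have hset2 : {s : ℝ | (0:ℝ) < |y s|} = ⋃ n : ℕ, {s : ℝ | (1:ℝ)/(n+1) < |y s|} := by
      ext s
      simp only [Set.mem_setOf_eq, Set.mem_iUnion]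
      constructor
      · intro hs
        obtain ⟨n, hn⟩ := exists_nat_one_div_lt hs
        exact ⟨n, hn⟩
      · rintro ⟨n, hn⟩
        exact lt_trans (by positivity) hn
    have hmono2 : Monotone (fun n : ℕ => {s : ℝ | (1:ℝ)/(n+1) < |y s|}) := by
      intro m n hmn s hs
      simp only [Set.mem_setOf_eq] at hs ⊢
      have hc : (m:ℝ) ≤ n := Nat.cast_le.mpr hmn
      have : (1:ℝ)/(n+1) ≤ 1/(m+1) := by
        apply one_div_le_one_div_of_le (by positivity); linarith
      linarith
    have h2 := MeasureTheory.tendsto_measure_iUnion_atTop (μ := muI α) hmono2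
    have hcomp2 : (⇑(muI α) ∘ fun n : ℕ => {s : ℝ | (1:ℝ)/(n+1) < |y s|}) =
        fun n : ℕ => distr α y ((1:ℝ)/(n+1)) := funext fun n => rfl
    rw [hcomp2] at h2
    show volume _ = muI α {s : ℝ | (0:ℝ) < |y s|}
    rw [hset2]
    exact tendsto_nhds_unique h1 h2
  · -- 0 < lam
    unfold distr
    rw [habs, muI_eq_vol_pos]
    have hseteq : {s : ℝ | lam < rearr α y s} ∩ Iset α ∩ Set.Ioi 0 =
        {s : ℝ | 0 < s ∧ ENNReal.ofReal s < distr α y lam} := by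
      ext s
      simp only [Set.mem_inter_iff, Set.mem_setOf_eq, Set.mem_Ioi]
      constructor
      · rintro ⟨⟨hr, hI⟩, hs⟩
        exact ⟨hs, (lt_rearr_iff hnj hs hlampos).1 hr⟩
      · rintro ⟨hs, hd⟩
        refine ⟨⟨(lt_rearr_iff hnj hs hlampos).2 hd, ?_⟩, hs⟩
        exact ⟨hs.le, lt_of_lt_of_le hd (distr_le_alpha hα y _)⟩
    rw [hseteq, vol_J]
    rfl

lemma mem_norm_rearr (hα : α = 1 ∨ α = ∞) (E : SymmetricBFS α) (hy : E.Mem y) :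
    E.Mem (rearr α y) ∧ E.N (rearr α y) = E.N y :=
  E.symmetric (measurable_rearr (noJunk_of_mem hα E hy)).aemeasurable hy
    (distr_rearr hα (noJunk_of_mem hα E hy))

lemma rearr_rearr (hα : α = 1 ∨ α = ∞) (hnj : NoJunk α y) :
    rearr α (rearr α y) = rearr α y := by
  funext t
  rw [rearr_eq_sInf, rearr_eq_sInf]
  unfold Sset
  rw [distr_rearr hα hnj]

lemma rearr_zero_of_one_le {t : ℝ} (hα1 : α = 1) (ht : 1 ≤ t) (y : ℝ → ℝ) :
    rearr α y t = 0 := by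
  rw [rearr_eq_sInf]
  have : Sset α y t = Set.Ioi 0 := by
    ext l
    simp only [Sset, Set.mem_setOf_eq, Set.mem_Ioi]
    refine ⟨fun h => h.1, fun h => ⟨h, ?_⟩⟩
    calc distr α y l ≤ α := distr_le_alpha (Or.inl hα1) y l
      _ = 1 := hα1
      _ = ENNReal.ofReal 1 := by simp
      _ ≤ ENNReal.ofReal t := ENNReal.ofReal_le_ofReal ht
  rw [this, csInf_Ioi]

end KPf
namespace KPf

variable {α : ℝ≥0∞} {y z x : ℝ → ℝ}

lemma maxf_nonneg (y : ℝ → ℝ) (t : ℝ) : 0 ≤ maxf α y t := by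
  unfold maxf
  rcases le_or_gt t 0 with ht | ht
  · rw [Set.Ioc_eq_empty (by exact not_lt.2 ht)]
    simp [MeasureTheory.Measure.restrict_empty]
  · apply div_nonneg _ ht.le
    apply MeasureTheory.setIntegral_nonneg measurableSet_Ioc
    exact fun s _ => rearr_nonneg y s

/-- extend integrability of the (antitone) rearrangement from one interval to all -/
lemma integrableOn_rearr_extend (hnj : NoJunk α y) {s : ℝ} (hs : 0 < s)
    (h : MeasureTheory.IntegrableOn (rearr α y) (Set.Ioc 0 s) volume) (t : ℝ) :
    MeasureTheory.IntegrableOn (rearr α y) (Set.Ioc 0 t) volume := by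
  rcases le_or_gt t s with hts | hts
  · exact h.mono_set (Set.Ioc_subset_Ioc_right hts)
  · have h2 : MeasureTheory.IntegrableOn (rearr α y) (Set.Ioc s t) volume := by
      apply MeasureTheory.Integrable.mono'
        (g := fun _ => rearr α y s) (MeasureTheory.integrableOn_const (by
          rw [Real.volume_Ioc]; exact ENNReal.ofReal_ne_top))
        ((measurable_rearr hnj).aestronglyMeasurable)
      filter_upwards [MeasureTheory.ae_restrict_mem measurableSet_Ioc] with u hu
      rw [Real.norm_eq_abs, abs_of_nonneg (rearr_nonneg y u)]
      exact rearr_antitoneOn hnj (Set.mem_Ioi.2 hs) (Set.mem_Ioi.2 (lt_trans hs hu.1)) hu.1.le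
    have := h.union h2
    rwa [Set.Ioc_union_Ioc_eq_Ioc (le_of_lt hs) (le_of_lt hts)] at this
  
lemma abs_mem_of_mem (E : SymmetricBFS α) (hy : E.Mem y) :
    E.Mem (fun s => |y s|) ∧ E.N (fun s => |y s|) = E.N y := by
  have hmeas : AEMeasurable (fun s => |y s|) (muI α) :=
    continuous_abs.measurable.comp_aemeasurable (E.mem_aemeasurable hy)
  have h1 : E.Mem (fun s => |y s|) :=
    (E.ideal hmeas hy (Filter.Eventually.of_forall fun s => by simp)).1
  refine ⟨h1, ?_⟩
  apply (E.symmetric hmeas hy ?_).2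
  funext lam
  unfold distr
  congr 1
  ext s
  simp [abs_abs]

/-- Key consequence of the LKM property: rearrangements of members of `E` are
locally integrable. -/
lemma integrableOn_rearr (hα : α = 1 ∨ α = ∞) (E : SymmetricBFS α)
    (hx : E.Mem x) (hLKM : E.IsLKMPoint x) (hy : E.Mem y) {t : ℝ} (ht : 0 < t) :
    MeasureTheory.IntegrableOn (rearr α y) (Set.Ioc 0 t) volume := by
  by_contra hni
  have hnjy := noJunk_of_mem hα E hy
  have hnjx := noJunk_of_mem hα E hx
  have hallni : ∀ s : ℝ, 0 < s → ¬ MeasureTheory.IntegrableOn (rearr α y) (Set.Ioc 0 s) volume :=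
    fun s hs hIs => hni (integrableOn_rearr_extend hnjy hs hIs t)
  set ya : ℝ → ℝ := fun s => |y s| with hyadef
  set xa : ℝ → ℝ := fun s => |x s| with hxadef
  obtain ⟨hya_mem, _⟩ := abs_mem_of_mem E hy
  obtain ⟨hxa_mem, hxa_norm⟩ := abs_mem_of_mem E hx
  set z : ℝ → ℝ := ya + (2:ℝ) • xa with hzdef
  have hz_mem : E.Mem z := E.add_mem hya_mem (E.smul_mem 2 hxa_mem)
  have hnjz := noJunk_of_mem hα E hz_mem
  have hz_apply : ∀ s, z s = |y s| + 2 * |x s| := fun s => rfl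
  have hz_nonneg : ∀ s, 0 ≤ z s := fun s => by rw [hz_apply]; positivity
  have hyz : ∀ s : ℝ, 0 < s → rearr α y s ≤ rearr α z s := by
    intro s hs
    apply rearr_mono_fn (Filter.Eventually.of_forall fun u => ?_) hnjz hs
    rw [abs_of_nonneg (hz_nonneg u), hz_apply]
    nlinarith [abs_nonneg (x u)]
  have hzni : ∀ s : ℝ, 0 < s → ¬ MeasureTheory.IntegrableOn (rearr α z) (Set.Ioc 0 s) volume := by
    intro s hs hIz
    apply hallni s hs
    apply MeasureTheory.Integrable.mono' hIz ((measurable_rearr hnjy).aestronglyMeasurable)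
    filter_upwards [MeasureTheory.ae_restrict_mem measurableSet_Ioc] with u hu
    rw [Real.norm_eq_abs, abs_of_nonneg (rearr_nonneg y u)]
    exact hyz u hu.1
  have hmaxfz : ∀ s : ℝ, 0 < s → maxf α z s = 0 := by
    intro s hs
    unfold maxf
    rw [MeasureTheory.integral_undef (hzni s hs), zero_div]
  have hHLP : HLP α z x := by
    intro s hs
    rw [hmaxfz s hs]
    exact maxf_nonneg x s
  have hne : rearr α z ≠ rearr α x := by
    intro heq
    have hx0 : ∀ s : ℝ, 0 < s → rearr α x s = 0 := by
      intro s hs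
      have h2x : rearr α ((2:ℝ) • x) s ≤ rearr α z s := by
        apply rearr_mono_fn (Filter.Eventually.of_forall fun u => ?_) hnjz hs
        rw [abs_of_nonneg (hz_nonneg u), hz_apply]
        simp only [Pi.smul_apply, smul_eq_mul, abs_mul]
        rw [abs_of_nonneg (by norm_num : (0:ℝ) ≤ 2)]
        nlinarith [abs_nonneg (y u)]
      rw [rearr_smul (by norm_num : (0:ℝ) < 2), heq] at h2x
      nlinarith [rearr_nonneg (α := α) x s]
    apply hallni 1 one_pos
    have hz0 : ∀ s : ℝ, 0 < s → rearr α y s = 0 := by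
      intro s hs
      have h1 := hyz s hs
      rw [heq, hx0 s hs] at h1
      exact le_antisymm h1 (rearr_nonneg y s)
    apply (MeasureTheory.integrable_congr (g := fun _ => (0:ℝ)) ?_).2
    · exact MeasureTheory.integrable_zero _ _ _
    · filter_upwards [MeasureTheory.ae_restrict_mem measurableSet_Ioc] with u hu
      exact hz0 u hu.1
  have hlt := hLKM z hz_mem hHLP hne
  have hge : 2 * E.N x ≤ E.N z := by
    have hb : ∀ᵐ s ∂(muI α), |((2:ℝ) • xa) s| ≤ |z s| := by
      apply Filter.Eventually.of_forall
      intro s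
      rw [abs_of_nonneg (hz_nonneg s), hz_apply]
      simp only [Pi.smul_apply, smul_eq_mul, abs_mul, hxadef]
      rw [abs_of_nonneg (by norm_num : (0:ℝ) ≤ 2), abs_abs]
      nlinarith [abs_nonneg (y s)]
    have h2 := (E.ideal ((E.mem_aemeasurable hxa_mem).const_smul (2:ℝ)) hz_mem hb).2
    rw [E.norm_smul', hxa_norm, abs_of_nonneg (by norm_num : (0:ℝ) ≤ 2)] at h2
    exact h2
  nlinarith [E.norm_nonneg' x]

/-- the averaged bound `y*(t) ≤ y**(t)` -/
lemma rearr_le_maxf (hnj : NoJunk α y) {t : ℝ} (ht : 0 < t)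
    (hint : MeasureTheory.IntegrableOn (rearr α y) (Set.Ioc 0 t) volume) :
    rearr α y t ≤ maxf α y t := by
  unfold maxf
  rw [le_div_iff₀ ht]
  have hconst : ∫ _ in Set.Ioc (0:ℝ) t, rearr α y t ∂volume = rearr α y t * t := by
    rw [MeasureTheory.setIntegral_const, measureReal_def, Real.volume_Ioc, smul_eq_mul]
    rw [ENNReal.toReal_ofReal (by linarith)]
    ring
  calc rearr α y t * t = ∫ _ in Set.Ioc (0:ℝ) t, rearr α y t ∂volume := hconst.symm
    _ ≤ ∫ s in Set.Ioc (0:ℝ) t, rearr α y s ∂volume := by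
        apply MeasureTheory.setIntegral_mono_on
          (MeasureTheory.integrableOn_const (by
            rw [Real.volume_Ioc]; exact ENNReal.ofReal_ne_top)) hint measurableSet_Ioc
        intro s hs
        exact rearr_antitoneOn hnj (Set.mem_Ioi.2 hs.1) (Set.mem_Ioi.2 ht) hs.2

lemma maxf_antitoneOn (hnj : NoJunk α y)
    (hint : ∀ t : ℝ, 0 < t → MeasureTheory.IntegrableOn (rearr α y) (Set.Ioc 0 t) volume) :
    AntitoneOn (maxf α y) (Set.Ioi 0) := by
  intro s hs t ht hst
  rw [Set.mem_Ioi] at hs ht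
  rcases eq_or_lt_of_le hst with h | hst'
  · rw [h]
  have hsplit : ∫ u in Set.Ioc (0:ℝ) t, rearr α y u ∂volume =
      (∫ u in Set.Ioc (0:ℝ) s, rearr α y u ∂volume) +
      ∫ u in Set.Ioc s t, rearr α y u ∂volume := by
    rw [← MeasureTheory.setIntegral_union (Set.Ioc_disjoint_Ioc_of_le le_rfl) measurableSet_Ioc
      (hint s hs) ((hint t ht).mono_set (Set.Ioc_subset_Ioc_left hs.le))]
    rw [Set.Ioc_union_Ioc_eq_Ioc hs.le hst]
  have hmid : ∫ u in Set.Ioc s t, rearr α y u ∂volume ≤ (t - s) * rearr α y s := by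
    have : ∫ _ in Set.Ioc s t, rearr α y s ∂volume = (t - s) * rearr α y s := by
      rw [MeasureTheory.setIntegral_const, measureReal_def, Real.volume_Ioc, smul_eq_mul,
        ENNReal.toReal_ofReal (by linarith)]
    rw [← this]
    apply MeasureTheory.setIntegral_mono_on
      ((hint t ht).mono_set (Set.Ioc_subset_Ioc_left hs.le))
      (MeasureTheory.integrableOn_const (by
        rw [Real.volume_Ioc]; exact ENNReal.ofReal_ne_top)) measurableSet_Ioc
    intro u hu
    exact rearr_antitoneOn hnj (Set.mem_Ioi.2 hs) (Set.mem_Ioi.2 (lt_trans hs hu.1)) hu.1.le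
  have hr := rearr_le_maxf hnj hs (hint s hs)
  unfold maxf
  rw [div_le_div_iff₀ ht hs]
  have hS : (∫ u in Set.Ioc (0:ℝ) s, rearr α y u ∂volume) = maxf α y s * s := by
    unfold maxf; field_simp
  calc (∫ u in Set.Ioc (0:ℝ) t, rearr α y u ∂volume) * s
      ≤ (maxf α y s * s + (t - s) * rearr α y s) * s := by
        apply mul_le_mul_of_nonneg_right _ hs.le
        rw [hsplit, hS]
        linarith [hmid]
    _ ≤ (maxf α y s * s + (t - s) * maxf α y s) * s := by
        apply mul_le_mul_of_nonneg_right _ hs.le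
        nlinarith [hr]
    _ = maxf α y s * t * s := by ring
    _ = (∫ u in Set.Ioc (0:ℝ) s, rearr α y u ∂volume) * t := by rw [hS]; ring

end KPf
namespace KPf

variable {α : ℝ≥0∞} {y : ℝ → ℝ}

/-- Cesàro: if `y* → 0` at infinity then `y** → 0` at infinity. -/
lemma maxf_tendsto_zero (hnj : NoJunk α y)
    (hint : ∀ t : ℝ, 0 < t → MeasureTheory.IntegrableOn (rearr α y) (Set.Ioc 0 t) volume)
    (h : Tendsto (rearr α y) atTop (𝓝 0)) :
    Tendsto (maxf α y) atTop (𝓝 0) := by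
  rw [Metric.tendsto_atTop]
  intro ε hε
  obtain ⟨T₀, hT₀⟩ := (Filter.eventually_atTop).1 (h.eventually (gt_mem_nhds (by linarith : (0:ℝ) < ε/2)))
  set T := max T₀ 1 with hTdef
  have hT1 : (0:ℝ) < T := lt_of_lt_of_le one_pos (le_max_right _ _)
  set C := ∫ u in Set.Ioc (0:ℝ) T, rearr α y u ∂volume with hCdef
  have hC0 : 0 ≤ C :=
    MeasureTheory.setIntegral_nonneg measurableSet_Ioc fun s _ => rearr_nonneg y s
  refine ⟨max T (2*C/ε) + 1, fun t ht => ?_⟩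
  have htT : T < t := by
    have := le_max_left T (2*C/ε)
    linarith
  have htpos : 0 < t := lt_trans hT1 htT
  have htC : 2*C/ε < t := by
    have := le_max_right T (2*C/ε)
    linarith
  have hsplit : ∫ u in Set.Ioc (0:ℝ) t, rearr α y u ∂volume =
      C + ∫ u in Set.Ioc T t, rearr α y u ∂volume := by
    rw [hCdef, ← MeasureTheory.setIntegral_union (Set.Ioc_disjoint_Ioc_of_le le_rfl) measurableSet_Ioc
      (hint T hT1) ((hint t htpos).mono_set (Set.Ioc_subset_Ioc_left hT1.le))]
    rw [Set.Ioc_union_Ioc_eq_Ioc hT1.le htT.le]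
  have hmid : ∫ u in Set.Ioc T t, rearr α y u ∂volume ≤ (t - T) * (ε/2) := by
    have hconst : ∫ _ in Set.Ioc T t, (ε/2) ∂volume = (t - T) * (ε/2) := by
      rw [MeasureTheory.setIntegral_const, measureReal_def, Real.volume_Ioc, smul_eq_mul,
        ENNReal.toReal_ofReal (by linarith)]
    rw [← hconst]
    apply MeasureTheory.setIntegral_mono_on
      ((hint t htpos).mono_set (Set.Ioc_subset_Ioc_left hT1.le))
      (MeasureTheory.integrableOn_const (by
        rw [Real.volume_Ioc]; exact ENNReal.ofReal_ne_top)) measurableSet_Ioc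
    intro u hu
    exact (hT₀ u (le_trans (le_max_left _ _) hu.1.le)).le
  have hbound : maxf α y t ≤ C/t + ε/2 := by
    unfold maxf
    rw [div_le_iff₀ htpos, hsplit]
    have h1 : (C/t + ε/2) * t = C + ε/2 * t := by field_simp
    rw [h1]
    nlinarith [hmid]
  have hCt : C/t < ε/2 := by
    rw [div_lt_iff₀ htpos]
    rcases eq_or_lt_of_le hC0 with h' | h'
    · rw [← h']; positivity
    · rw [div_lt_iff₀ hε] at htC
      nlinarith
  rw [Real.dist_eq, sub_zero, abs_of_nonneg (maxf_nonneg y t)]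
  linarith

/-- From pointwise a.e. convergence to `0` plus a uniform smallness at infinity,
the rearrangements converge to zero pointwise. -/
lemma tendsto_rearr_of_tendsto_ae {w : ℕ → ℝ → ℝ}
    (hmeas : ∀ k, AEMeasurable (w k) (muI α))
    (hnonneg : ∀ k s, 0 ≤ w k s)
    (hsmall : ∀ ε : ℝ, 0 < ε → ∃ T : ℝ, 0 < T ∧ ∀ k, ∀ s ≥ T, w k s < ε)
    (hae : ∀ᵐ s ∂(muI α), Tendsto (fun k => w k s) atTop (𝓝 0)) :
    ∀ s : ℝ, 0 < s → Tendsto (fun k => rearr α (w k) s) atTop (𝓝 0) := by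
  intro s hs
  rw [Metric.tendsto_atTop]
  intro ε hε
  obtain ⟨T, hT, hTs⟩ := hsmall (ε/2) (by linarith)
  set μT := (muI α).restrict (Set.Ioc 0 T) with hμTdef
  haveI : MeasureTheory.IsFiniteMeasure μT := by
    constructor
    rw [hμTdef, MeasureTheory.Measure.restrict_apply_univ, muI_apply]
    calc volume (Set.Ioc 0 T ∩ Iset α) ≤ volume (Set.Ioc (0:ℝ) T) :=
          measure_mono Set.inter_subset_left
      _ < ∞ := by rw [Real.volume_Ioc]; exact ENNReal.ofReal_lt_top
  have htim : MeasureTheory.TendstoInMeasure μT w atTop (fun _ => (0:ℝ)) := by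
    apply MeasureTheory.tendstoInMeasure_of_tendsto_ae
      (fun k => ((hmeas k).restrict).aestronglyMeasurable)
    exact MeasureTheory.ae_restrict_of_ae hae
  have hkey := htim (ENNReal.ofReal (ε/2)) (ENNReal.ofReal_pos.2 (by linarith))
  have hofReal : (0:ℝ≥0∞) < ENNReal.ofReal s := ENNReal.ofReal_pos.2 hs
  have hset : ∀ k, {u | ENNReal.ofReal (ε/2) ≤ edist (w k u) 0} = {u | ε/2 ≤ dist (w k u) 0} := by
    intro k; ext u; simp only [Set.mem_setOf_eq, edist_dist]
    exact ENNReal.ofReal_le_ofReal_iff dist_nonneg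
  have hev : ∀ᶠ k in atTop, μT {u | ε/2 ≤ dist (w k u) 0} < ENNReal.ofReal s :=
    (hkey.eventually_lt_const hofReal).mono fun k hk => by rwa [hset k] at hk
  rw [Filter.eventually_atTop] at hev
  obtain ⟨k₀, hk₀⟩ := hev
  refine ⟨k₀, fun k hk => ?_⟩
  have hdistr : distr α (w k) (ε/2) ≤ ENNReal.ofReal s := by
    have hsub : {u : ℝ | ε/2 < |w k u|} ∩ Iset α ⊆
        (({u | ε/2 ≤ dist (w k u) 0} ∩ Set.Ioc 0 T) ∩ Iset α) ∪ {0} := by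
      rintro u ⟨hu1, hu2⟩
      simp only [Set.mem_setOf_eq] at hu1
      rcases eq_or_lt_of_le hu2.1 with h0 | h0
      · exact Or.inr (by simp [← h0])
      · left
        refine ⟨⟨?_, ⟨h0, ?_⟩⟩, hu2⟩
        · simp only [Set.mem_setOf_eq, Real.dist_eq, sub_zero]
          exact hu1.le
        · by_contra hTu
          push_neg at hTu
          have := hTs k u hTu.le
          rw [abs_of_nonneg (hnonneg k u)] at hu1
          linarith
    calc distr α (w k) (ε/2) = volume ({u : ℝ | ε/2 < |w k u|} ∩ Iset α) := muI_apply _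
      _ ≤ volume ((({u | ε/2 ≤ dist (w k u) 0} ∩ Set.Ioc 0 T) ∩ Iset α) ∪ ({0} : Set ℝ)) :=
          measure_mono hsub
      _ ≤ volume (({u | ε/2 ≤ dist (w k u) 0} ∩ Set.Ioc 0 T) ∩ Iset α) + volume ({0} : Set ℝ) :=
          measure_union_le _ _
      _ = volume (({u | ε/2 ≤ dist (w k u) 0} ∩ Set.Ioc 0 T) ∩ Iset α) := by
          rw [Real.volume_singleton, add_zero]
      _ = μT {u | ε/2 ≤ dist (w k u) 0} := by
          rw [hμTdef, MeasureTheory.Measure.restrict_apply' measurableSet_Ioc, muI_apply]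
      _ ≤ ENNReal.ofReal s := (hk₀ k hk).le
  have hle : rearr α (w k) s ≤ ε/2 := rearr_le_of_distr_le (by linarith) hdistr
  rw [Real.dist_eq, sub_zero, abs_of_nonneg (rearr_nonneg _ s)]
  linarith

end KPf
namespace KPf

variable {α : ℝ≥0∞} {y : ℝ → ℝ}

lemma muI_ae_of_pos_off_countable {P : ℝ → Prop} {J : Set ℝ} (hJ : J.Countable)
    (h : ∀ s : ℝ, 0 < s → s ∉ J → P s) : ∀ᵐ s ∂(muI α), P s := by
  rw [MeasureTheory.ae_iff]
  rw [muI_apply]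
  have hnull : volume (J ∪ ({0} : Set ℝ)) = 0 := by
    apply measure_union_null (hJ.measure_zero volume)
    exact Real.volume_singleton
  refine measure_mono_null ?_ hnull
  · rintro s ⟨hs1, hs2⟩
    simp only [Set.mem_setOf_eq] at hs1
    by_cases hsJ : s ∈ J
    · exact Or.inl hsJ
    · rcases eq_or_lt_of_le hs2.1 with h0 | h0
      · exact Or.inr (by simp [← h0])
      · exact absurd (h s h0 hsJ) hs1

lemma muI_ae_of_pos {P : ℝ → Prop} (h : ∀ s : ℝ, 0 < s → P s) :
    ∀ᵐ s ∂(muI α), P s :=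
  muI_ae_of_pos_off_countable Set.countable_empty (fun s hs _ => h s hs)

lemma exists_forall_le_of_tendsto {f : ℕ → ℝ} {a : ℝ}
    (h : Tendsto f atTop (𝓝 a)) : ∃ B : ℝ, ∀ n, f n ≤ B := by
  have hb : BddAbove (Set.range f) := h.bddAbove_range
  obtain ⟨B, hB⟩ := hb
  exact ⟨B, fun n => hB (Set.mem_range_self n)⟩

/-- A nonnegative antitone "right-open" function on `(0,∞)` is its own rearrangement. -/
lemma rearr_eq_self (hα : α = 1 ∨ α = ∞) {v : ℝ → ℝ} (hnjv : NoJunk α v)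
    (hanti : AntitoneOn v (Set.Ioi 0)) (hnn : ∀ t, 0 ≤ v t)
    (hopen : ∀ t, 0 < t → ∀ lam, 0 < lam → lam < v t → ∃ t', t < t' ∧ lam < v t')
    (hbig : α = 1 → ∀ t, 1 ≤ t → v t = 0) :
    ∀ t, 0 < t → rearr α v t = v t := by
  intro t ht
  apply le_antisymm
  · apply le_of_forall_pos_le_add
    intro ε hε
    apply rearr_le_of_distr_le (by have := hnn t; linarith)
    have hsub : {s : ℝ | v t + ε < |v s|} ∩ Iset α ⊆ Set.Ioo 0 t ∪ {0} := by
      rintro s ⟨hs1, hs2⟩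
      simp only [Set.mem_setOf_eq, abs_of_nonneg (hnn s)] at hs1
      rcases eq_or_lt_of_le hs2.1 with h0 | h0
      · exact Or.inr (by simp [← h0])
      · left
        refine ⟨h0, ?_⟩
        by_contra hst
        push_neg at hst
        have := hanti (Set.mem_Ioi.2 ht) (Set.mem_Ioi.2 h0) hst
        linarith
    calc distr α v (v t + ε) = volume ({s : ℝ | v t + ε < |v s|} ∩ Iset α) := muI_apply _
      _ ≤ volume (Set.Ioo 0 t ∪ ({0} : Set ℝ)) := measure_mono hsub
      _ ≤ volume (Set.Ioo (0:ℝ) t) + volume ({0} : Set ℝ) := measure_union_le _ _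
      _ = ENNReal.ofReal t := by rw [Real.volume_Ioo, Real.volume_singleton, add_zero, sub_zero]
  · rcases eq_or_lt_of_le (hnn t) with h0 | h0
    · rw [← h0]; exact rearr_nonneg v t
    apply le_csInf (hnjv t ht)
    intro l hl
    by_contra hlv
    push_neg at hlv
    obtain ⟨t', ht', hlt'⟩ := hopen t ht l hl.1 hlv
    have htlt1 : α = 1 → t < 1 := by
      intro h1
      by_contra htge
      push_neg at htge
      rw [hbig h1 t htge] at h0
      exact absurd h0 (lt_irrefl 0)
    set t'' : ℝ := if α = 1 then min t' ((t+1)/2) else min t' (t+1) with ht''def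
    have ht''t : t < t'' := by
      rw [ht''def]
      split_ifs with hcase
      · have := htlt1 hcase
        apply lt_min ht' (by linarith)
      · exact lt_min ht' (by linarith)
    have ht''t' : t'' ≤ t' := by
      rw [ht''def]; split_ifs <;> exact min_le_left _ _
    have ht''pos : 0 < t'' := lt_trans ht ht''t
    have hvt'' : l < v t'' := by
      rcases eq_or_lt_of_le ht''t' with he | hlt
      · rw [he]; exact hlt'
      · exact lt_of_lt_of_le hlt' (hanti (Set.mem_Ioi.2 ht''pos)
          (Set.mem_Ioi.2 (lt_trans ht ht')) hlt.le)
    have hsub2 : Set.Ioc 0 t'' ⊆ {s : ℝ | l < |v s|} ∩ Iset α := by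
      rintro s ⟨hs1, hs2⟩
      constructor
      · simp only [Set.mem_setOf_eq, abs_of_nonneg (hnn s)]
        calc l < v t'' := hvt''
          _ ≤ v s := hanti (Set.mem_Ioi.2 hs1) (Set.mem_Ioi.2 ht''pos) hs2
      · refine ⟨hs1.le, ?_⟩
        rcases hα with h1 | h1
        · rw [h1]
          have hs1' : s < 1 := by
            have := htlt1 h1
            have ht''lt : t'' ≤ (t+1)/2 := by rw [ht''def, if_pos h1]; exact min_le_right _ _
            calc s ≤ t'' := hs2
              _ ≤ (t+1)/2 := ht''lt
              _ < 1 := by linarith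
          calc ENNReal.ofReal s < ENNReal.ofReal 1 := (ENNReal.ofReal_lt_ofReal_iff one_pos).2 hs1'
            _ = 1 := by simp
        · rw [h1]; exact ENNReal.ofReal_lt_top
    have hdge : ENNReal.ofReal t'' ≤ distr α v l := by
      calc ENNReal.ofReal t'' = volume (Set.Ioc (0:ℝ) t'') := by rw [Real.volume_Ioc, sub_zero]
        _ ≤ volume ({s : ℝ | l < |v s|} ∩ Iset α) := measure_mono hsub2
        _ = distr α v l := (muI_apply _).symm
    have hcon : ENNReal.ofReal t'' ≤ ENNReal.ofReal t := le_trans hdge hl.2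
    rw [ENNReal.ofReal_le_ofReal_iff (by linarith)] at hcon
    linarith

end KPf
namespace KPf

variable {α : ℝ≥0∞}

lemma core (hα : α = 1 ∨ α = ∞) (E : SymmetricBFS α) {x : ℝ → ℝ} (hx : E.Mem x)
    (hKOC : E.IsKOCPoint x) (hLKM : E.IsLKMPoint x) (hinf : rearrInftyZero α x)
    (u : ℕ → ℝ → ℝ) (h1 : ∀ n, E.Mem (u n)) (h2 : ∀ n, HLP α (u n) x)
    (h3 : Tendsto (fun n => E.N (u n)) atTop (𝓝 (E.N x))) :
    ∃ φ : ℕ → ℕ, StrictMono φ ∧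
      Tendsto (fun k => E.N (rearr α (u (φ k)) - rearr α x)) atTop (𝓝 0) := by
  classical
  set d : ℕ → ℝ → ℝ := fun n => rearr α (u n) with hddef
  set xs : ℝ → ℝ := rearr α x with hxsdef
  have hnjx : NoJunk α x := noJunk_of_mem hα E hx
  have hnju : ∀ n, NoJunk α (u n) := fun n => noJunk_of_mem hα E (h1 n)
  have hdmem : ∀ n, E.Mem (d n) := fun n => (mem_norm_rearr hα E (h1 n)).1
  have hdnorm : ∀ n, E.N (d n) = E.N (u n) := fun n => (mem_norm_rearr hα E (h1 n)).2
  have hxs_mem : E.Mem xs := (mem_norm_rearr hα E hx).1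
  have hint_u : ∀ n, ∀ t : ℝ, 0 < t →
      MeasureTheory.IntegrableOn (d n) (Set.Ioc 0 t) volume :=
    fun n t ht => integrableOn_rearr hα E hx hLKM (h1 n) ht
  have hint_x : ∀ t : ℝ, 0 < t →
      MeasureTheory.IntegrableOn xs (Set.Ioc 0 t) volume :=
    fun t ht => integrableOn_rearr hα E hx hLKM hx ht
  have hd_anti : ∀ n, AntitoneOn (d n) (Set.Ioi 0) := fun n => rearr_antitoneOn (hnju n)
  have hd_nn : ∀ n t, 0 ≤ d n t := fun n t => rearr_nonneg (u n) t
  set g : ℝ → ℝ := maxf α x with hgdef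
  have hg_anti : AntitoneOn g (Set.Ioi 0) := maxf_antitoneOn hnjx hint_x
  have hg_nn : ∀ t, 0 ≤ g t := fun t => maxf_nonneg x t
  have hdg : ∀ n, ∀ t : ℝ, 0 < t → d n t ≤ g t := by
    intro n t ht
    calc d n t ≤ maxf α (u n) t := rearr_le_maxf (hnju n) ht (hint_u n t ht)
      _ ≤ g t := h2 n t ht
  have hxsg : ∀ t : ℝ, 0 < t → xs t ≤ g t := fun t ht => rearr_le_maxf hnjx ht (hint_x t ht)
  -- Step A : compactness
  set Q := {q : ℚ // 0 < ((q:ℝ))} with hQdef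
  set F : ℕ → Q → ℝ := fun n q => d n (q:ℝ) with hFdef
  set sQ : Set (Q → ℝ) := Set.univ.pi fun q : Q => Set.Icc (0:ℝ) (g (q:ℝ)) with hsQdef
  have hFs : ∀ n, F n ∈ sQ := by
    intro n
    rw [hsQdef, Set.mem_univ_pi]
    exact fun q => ⟨hd_nn n _, hdg n _ q.2⟩
  obtain ⟨v₀, hv₀s, φ, hφ, hconv0⟩ :=
    (isCompact_univ_pi fun q : Q => isCompact_Icc).tendsto_subseq hFs
  have hconv : ∀ q : Q, Tendsto (fun k => d (φ k) (q:ℝ)) atTop (𝓝 (v₀ q)) :=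
    tendsto_pi_nhds.1 hconv0
  have hv₀icc : ∀ q : Q, v₀ q ∈ Set.Icc (0:ℝ) (g (q:ℝ)) := Set.mem_univ_pi.1 hv₀s
  have hv₀nn : ∀ q : Q, 0 ≤ v₀ q := fun q => (hv₀icc q).1
  have hv₀g : ∀ q : Q, v₀ q ≤ g (q:ℝ) := fun q => (hv₀icc q).2
  have hv₀anti : ∀ q q' : Q, (q:ℝ) ≤ (q':ℝ) → v₀ q' ≤ v₀ q := by
    intro q q' hqq'
    apply le_of_tendsto_of_tendsto' (hconv q') (hconv q)
    intro k
    exact hd_anti (φ k) (Set.mem_Ioi.2 q.2) (Set.mem_Ioi.2 (lt_of_lt_of_le q.2 hqq')) hqq'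
  -- Step B : limit function
  set v : ℝ → ℝ := fun t => sSup (v₀ '' {q : Q | t < (q:ℝ)}) with hvdef
  have hQne : ∀ t : ℝ, (v₀ '' {q : Q | t < (q:ℝ)}).Nonempty := by
    intro t
    obtain ⟨q, hq⟩ := exists_rat_gt (max t 0)
    have hq0 : 0 < ((q:ℝ)) := lt_of_le_of_lt (le_max_right t 0) hq
    exact ⟨v₀ ⟨q, hq0⟩, Set.mem_image_of_mem _ (lt_of_le_of_lt (le_max_left t 0) hq)⟩
  have hbddQ : ∀ t : ℝ, 0 < t → BddAbove (v₀ '' {q : Q | t < (q:ℝ)}) := by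
    intro t ht
    obtain ⟨q₀, hq₀1, hq₀2⟩ := exists_rat_btwn ht
    refine ⟨v₀ ⟨q₀, hq₀1⟩, ?_⟩
    rintro r ⟨q, hq, rfl⟩
    have hq' : t < (q:ℝ) := hq
    exact hv₀anti _ _ (le_of_lt (lt_trans hq₀2 hq'))
  have hv_nn : ∀ t, 0 ≤ v t := by
    intro t
    apply Real.sSup_nonneg
    rintro r ⟨q, _, rfl⟩
    exact hv₀nn q
  have hv_anti : AntitoneOn v (Set.Ioi 0) := by
    intro t ht t' ht' htt'
    rw [hvdef]
    apply csSup_le_csSup (hbddQ t ht) (hQne t')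
    apply Set.image_mono
    intro q hq
    exact lt_of_le_of_lt htt' hq
  have hsetuniv : ∀ t : ℝ, t ≤ 0 → {q : Q | t < (q:ℝ)} = Set.univ := by
    intro t ht
    ext q
    simp only [Set.mem_setOf_eq, Set.mem_univ, iff_true]
    exact lt_of_le_of_lt ht q.2
  have hv_const : ∀ t : ℝ, t ≤ 0 → v t = v 0 := by
    intro t ht
    show sSup _ = sSup _
    rw [hsetuniv t ht, hsetuniv 0 le_rfl]
  have hv_meas : Measurable v := measurable_of_antitoneOn hv_anti hv_const
  have hv_le_g : ∀ t : ℝ, 0 < t → v t ≤ g t := by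
    intro t ht
    apply csSup_le (hQne t)
    rintro r ⟨q, hq, rfl⟩
    calc v₀ q ≤ g (q:ℝ) := hv₀g q
      _ ≤ g t := hg_anti (Set.mem_Ioi.2 ht) (Set.mem_Ioi.2 (lt_trans ht hq)) (le_of_lt hq)
  have hd_big : α = 1 → ∀ n, ∀ t : ℝ, 1 ≤ t → d n t = 0 := by
    intro h1' n t ht
    exact rearr_zero_of_one_le h1' ht (u n)
  have hv₀_big : α = 1 → ∀ q : Q, 1 ≤ (q:ℝ) → v₀ q = 0 := by
    intro h1' q hq
    have : Tendsto (fun k => d (φ k) (q:ℝ)) atTop (𝓝 0) := by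
      have heq : (fun k => d (φ k) (q:ℝ)) = fun _ => (0:ℝ) :=
        funext fun k => hd_big h1' (φ k) _ hq
      rw [heq]
      exact tendsto_const_nhds
    exact tendsto_nhds_unique (hconv q) this
  have hv_big : α = 1 → ∀ t : ℝ, 1 ≤ t → v t = 0 := by
    intro h1' t ht
    apply le_antisymm _ (hv_nn t)
    apply csSup_le (hQne t)
    rintro r ⟨q, hq, rfl⟩
    rw [hv₀_big h1' q (le_trans ht (le_of_lt hq))]
  have hv_open : ∀ t : ℝ, 0 < t → ∀ lam : ℝ, 0 < lam → lam < v t →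
      ∃ t', t < t' ∧ lam < v t' := by
    intro t ht lam _ hlam
    obtain ⟨r, ⟨q, hq, rfl⟩, hr⟩ := exists_lt_of_lt_csSup (hQne t) hlam
    have hq' : t < (q:ℝ) := hq
    refine ⟨(t + (q:ℝ))/2, by linarith, ?_⟩
    have hmem : v₀ q ∈ v₀ '' {q' : Q | (t + (q:ℝ))/2 < (q':ℝ)} :=
      Set.mem_image_of_mem _ (by simp only [Set.mem_setOf_eq]; linarith)
    calc lam < v₀ q := hr
      _ ≤ v ((t + (q:ℝ))/2) := le_csSup (hbddQ _ (by linarith)) hmem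
  -- lower envelope and jump set
  set vm : ℝ → ℝ := fun t => sInf (v₀ '' {q : Q | (q:ℝ) < t}) with hvmdef
  have hQne' : ∀ t : ℝ, 0 < t → (v₀ '' {q : Q | (q:ℝ) < t}).Nonempty := by
    intro t ht
    obtain ⟨q, hq1, hq2⟩ := exists_rat_btwn ht
    exact ⟨v₀ ⟨q, by exact_mod_cast hq1⟩, Set.mem_image_of_mem _ hq2⟩
  have hbddb : ∀ t : ℝ, BddBelow (v₀ '' {q : Q | (q:ℝ) < t}) := by
    intro t
    refine ⟨0, ?_⟩
    rintro r ⟨q, _, rfl⟩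
    exact hv₀nn q
  have hv_le_vm : ∀ t : ℝ, 0 < t → v t ≤ vm t := by
    intro t ht
    apply csSup_le (hQne t)
    rintro r ⟨q, hq, rfl⟩
    apply le_csInf (hQne' t ht)
    rintro r' ⟨q', hq', rfl⟩
    have hq1 : t < (q:ℝ) := hq
    have hq2 : (q':ℝ) < t := hq'
    exact hv₀anti q' q (by linarith)
  set J : Set ℝ := {t | 0 < t ∧ v t < vm t} with hJdef
  have hJc : J.Countable := by
    have hchoice : ∀ t ∈ J, ∃ r : ℚ, v t < (r:ℝ) ∧ (r:ℝ) < vm t := by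
      intro t ht
      exact exists_rat_btwn ht.2
    choose! r hr1 hr2 using hchoice
    have hkey : ∀ a b : ℝ, a ∈ J → b ∈ J → a < b → r a ≠ r b := by
      intro a b ha hb hab hreq
      obtain ⟨q, hq1, hq2⟩ := exists_rat_btwn hab
      have hq0 : 0 < (q:ℝ) := lt_trans ha.1 hq1
      have hA : vm b ≤ v₀ ⟨q, hq0⟩ := csInf_le (hbddb b) (Set.mem_image_of_mem _ hq2)
      have hB : v₀ ⟨q, hq0⟩ ≤ v a := le_csSup (hbddQ a ha.1) (Set.mem_image_of_mem _ hq1)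
      have hc1 := hr1 a ha
      have hc2 := hr2 b hb
      rw [hreq] at hc1
      have hfalse : (r b : ℝ) < (r b : ℝ) := by
        calc (r b : ℝ) < vm b := hc2
          _ ≤ v₀ ⟨q, hq0⟩ := hA
          _ ≤ v a := hB
          _ < (r b : ℝ) := hc1
      exact lt_irrefl _ hfalse
    have hinj : Set.InjOn r J := by
      intro t1 h1 t2 h2 hr12
      by_contra hne
      rcases lt_or_gt_of_ne hne with hlt | hlt
      · exact hkey t1 t2 h1 h2 hlt hr12
      · exact hkey t2 t1 h2 h1 hlt hr12.symm
    exact Set.countable_of_injective_of_countable_image hinj (Set.to_countable _)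
  have hgood : ∀ t : ℝ, 0 < t → t ∉ J →
      Tendsto (fun k => d (φ k) t) atTop (𝓝 (v t)) := by
    intro t ht htJ
    have hvm : vm t = v t := by
      apply le_antisymm _ (hv_le_vm t ht)
      by_contra hcon
      push_neg at hcon
      exact htJ ⟨ht, hcon⟩
    rw [Metric.tendsto_atTop]
    intro ε hε
    have h1 : ∃ q' : Q, ((q':ℝ) < t) ∧ v₀ q' < v t + ε/2 := by
      have hlt : sInf (v₀ '' {q : Q | (q:ℝ) < t}) < v t + ε/2 := by
        have : vm t < v t + ε/2 := by rw [hvm]; linarith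
        exact this
      obtain ⟨r', ⟨q', hq', rfl⟩, hlt'⟩ := exists_lt_of_csInf_lt (hQne' t ht) hlt
      exact ⟨q', hq', hlt'⟩
    have h2 : ∃ q : Q, (t < (q:ℝ)) ∧ v t - ε/2 < v₀ q := by
      have hlt : v t - ε/2 < sSup (v₀ '' {q : Q | t < (q:ℝ)}) := by
        have hvt : sSup (v₀ '' {q : Q | t < (q:ℝ)}) = v t := rfl
        rw [hvt]
        linarith
      obtain ⟨r', ⟨q, hq, rfl⟩, hlt'⟩ := exists_lt_of_lt_csSup (hQne t) hlt
      exact ⟨q, hq, hlt'⟩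
    obtain ⟨q', hq't, hq'v⟩ := h1
    obtain ⟨q, htq, hqv⟩ := h2
    have hc1 : ∀ᶠ k in atTop, d (φ k) ((q':ℚ):ℝ) < v t + ε :=
      (hconv q').eventually_lt_const (by linarith)
    have hc2 : ∀ᶠ k in atTop, v t - ε < d (φ k) ((q:ℚ):ℝ) :=
      (hconv q).eventually_const_lt (by linarith)
    rw [Filter.eventually_atTop] at hc1 hc2
    obtain ⟨k1, hk1⟩ := hc1
    obtain ⟨k2, hk2⟩ := hc2
    refine ⟨max k1 k2, fun k hk => ?_⟩
    have hub : d (φ k) t ≤ d (φ k) ((q':ℚ):ℝ) :=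
      hd_anti _ (Set.mem_Ioi.2 q'.2) (Set.mem_Ioi.2 ht) hq't.le
    have hlb : d (φ k) ((q:ℚ):ℝ) ≤ d (φ k) t :=
      hd_anti _ (Set.mem_Ioi.2 ht) (Set.mem_Ioi.2 (lt_trans ht htq)) htq.le
    have e1 := hk1 k (le_trans (le_max_left _ _) hk)
    have e2 := hk2 k (le_trans (le_max_right _ _) hk)
    rw [Real.dist_eq, abs_lt]
    constructor <;> linarith
  -- Step C : Fatou and the limit's membership
  set w : ℕ → ℝ → ℝ := fun m t => (⨅ k : ℕ, ENNReal.ofReal (d (φ (m + k)) t)).toReal with hwdef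
  have hw_ne_top : ∀ m t, (⨅ k : ℕ, ENNReal.ofReal (d (φ (m + k)) t)) ≠ ∞ :=
    fun m t => ne_top_of_le_ne_top ENNReal.ofReal_ne_top (iInf_le _ 0)
  have hw_le : ∀ m k t, w m t ≤ d (φ (m + k)) t := by
    intro m k t
    calc w m t ≤ (ENNReal.ofReal (d (φ (m+k)) t)).toReal :=
          ENNReal.toReal_mono ENNReal.ofReal_ne_top (iInf_le _ k)
      _ = d (φ (m+k)) t := ENNReal.toReal_ofReal (hd_nn _ _)
  have hw_nn : ∀ m t, 0 ≤ w m t := fun m t => ENNReal.toReal_nonneg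
  have hw_mono : ∀ m t, w m t ≤ w (m+1) t := by
    intro m t
    apply ENNReal.toReal_mono (hw_ne_top (m+1) t)
    apply le_iInf
    intro k
    calc (⨅ j : ℕ, ENNReal.ofReal (d (φ (m+j)) t)) ≤ ENNReal.ofReal (d (φ (m + (k+1))) t) :=
          iInf_le _ (k+1)
      _ = ENNReal.ofReal (d (φ (m+1+k)) t) := by rw [show m + (k+1) = m+1+k by ring]
  have hw_meas : ∀ m, Measurable (w m) := by
    intro m
    apply Measurable.ennreal_toReal
    apply Measurable.iInf
    intro k
    exact (measurable_rearr (hnju (φ (m+k)))).ennreal_ofReal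
  have hw_mem : ∀ m, E.Mem (w m) ∧ E.N (w m) ≤ E.N (u (φ m)) := by
    intro m
    have hb : ∀ᵐ s ∂(muI α), |w m s| ≤ |d (φ m) s| := by
      apply Filter.Eventually.of_forall
      intro s
      rw [abs_of_nonneg (hw_nn m s), abs_of_nonneg (hd_nn (φ m) s)]
      simpa using hw_le m 0 s
    have hh := E.ideal (hw_meas m).aemeasurable (hdmem (φ m)) hb
    exact ⟨hh.1, le_trans hh.2 (le_of_eq (hdnorm (φ m)))⟩
  have hw_tend : ∀ t : ℝ, 0 < t → t ∉ J → Tendsto (fun m => w m t) atTop (𝓝 (v t)) := by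
    intro t ht htJ
    have hg' := hgood t ht htJ
    rw [Metric.tendsto_atTop] at hg' ⊢
    intro ε hε
    obtain ⟨M, hM⟩ := hg' (ε/2) (by linarith)
    refine ⟨M, fun m hm => ?_⟩
    have hub : w m t ≤ d (φ (m+0)) t := hw_le m 0 t
    have h0 : |d (φ (m+0)) t - v t| < ε/2 := by
      rw [← Real.dist_eq]
      exact hM (m+0) (by omega)
    rw [abs_lt] at h0
    have hlbw : v t - ε/2 ≤ w m t := by
      rcases le_or_gt (v t - ε/2) 0 with hc | hc
      · linarith [hw_nn m t]
      · have hle : ENNReal.ofReal (v t - ε/2) ≤ ⨅ k : ℕ, ENNReal.ofReal (d (φ (m+k)) t) := by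
          apply le_iInf
          intro k
          apply ENNReal.ofReal_le_ofReal
          have h5 := hM (m+k) (by omega)
          rw [Real.dist_eq, abs_lt] at h5
          linarith [h5.1]
        calc v t - ε/2 = (ENNReal.ofReal (v t - ε/2)).toReal := (ENNReal.toReal_ofReal hc.le).symm
          _ ≤ w m t := ENNReal.toReal_mono (hw_ne_top m t) hle
    rw [Real.dist_eq, abs_lt]
    constructor <;> linarith [h0.1, h0.2]
  obtain ⟨B, hB⟩ := exists_forall_le_of_tendsto h3
  have hfatou := E.fatou w v (fun m => (hw_mem m).1) hv_meas.aemeasurable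
    (fun m => Filter.Eventually.of_forall (fun s => hw_nn m s))
    (fun m => Filter.Eventually.of_forall (fun s => hw_mono m s))
    (muI_ae_of_pos_off_countable hJc (fun s hs hsJ => hw_tend s hs hsJ))
    ⟨B, fun m => le_trans (hw_mem m).2 (hB (φ m))⟩
  have hv_mem : E.Mem v := hfatou.1
  have hNw_tend : Tendsto (fun m => E.N (w m)) atTop (𝓝 (E.N v)) := hfatou.2
  have hNuφ : Tendsto (fun m => E.N (u (φ m))) atTop (𝓝 (E.N x)) :=
    h3.comp hφ.tendsto_atTop
  have hNv_le : E.N v ≤ E.N x :=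
    le_of_tendsto_of_tendsto' hNw_tend hNuφ (fun m => (hw_mem m).2)
  -- Step D : the excess part tends to zero in norm (via K-order continuity)
  set w1 : ℕ → ℝ → ℝ := fun k t => max (d (φ k) t - v t) 0 with hw1def
  have hw1_nn : ∀ k t, 0 ≤ w1 k t := fun k t => le_max_right _ _
  have hw1_le : ∀ k t, w1 k t ≤ d (φ k) t := by
    intro k t
    apply max_le _ (hd_nn _ t)
    linarith [hv_nn t]
  have hw1_meas : ∀ k, Measurable (w1 k) :=
    fun k => ((measurable_rearr (hnju (φ k))).sub hv_meas).max measurable_const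
  have hw1_mem : ∀ k, E.Mem (w1 k) := by
    intro k
    refine (E.ideal (hw1_meas k).aemeasurable (hdmem (φ k)) ?_).1
    apply Filter.Eventually.of_forall
    intro s
    rw [abs_of_nonneg (hw1_nn k s), abs_of_nonneg (hd_nn (φ k) s)]
    exact hw1_le k s
  have hnjd : ∀ k, NoJunk α (d (φ k)) := fun k => noJunk_of_mem hα E (hdmem (φ k))
  have hrearr_d : ∀ k, rearr α (d (φ k)) = d (φ k) :=
    fun k => rearr_rearr hα (hnju (φ k))
  have hw1_rearr_le : ∀ k, ∀ s : ℝ, 0 < s → rearr α (w1 k) s ≤ d (φ k) s := by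
    intro k s hs
    have h5 : rearr α (w1 k) s ≤ rearr α (d (φ k)) s := by
      apply rearr_mono_fn _ (hnjd k) hs
      apply Filter.Eventually.of_forall
      intro t
      rw [abs_of_nonneg (hw1_nn k t), abs_of_nonneg (hd_nn (φ k) t)]
      exact hw1_le k t
    rwa [hrearr_d k] at h5
  have hw1_int : ∀ k, ∀ t : ℝ, 0 < t →
      MeasureTheory.IntegrableOn (rearr α (w1 k)) (Set.Ioc 0 t) volume := by
    intro k t ht
    apply MeasureTheory.Integrable.mono' (hint_u (φ k) t ht)
      (measurable_rearr (noJunk_of_mem hα E (hw1_mem k))).aestronglyMeasurable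
    filter_upwards [MeasureTheory.ae_restrict_mem measurableSet_Ioc] with s hs
    rw [Real.norm_eq_abs, abs_of_nonneg (rearr_nonneg _ s)]
    exact hw1_rearr_le k s hs.1
  have hw1_HLP : ∀ k, HLP α (w1 k) x := by
    intro k t ht
    have hle : (∫ s in Set.Ioc (0:ℝ) t, rearr α (w1 k) s) ≤
        ∫ s in Set.Ioc (0:ℝ) t, d (φ k) s :=
      MeasureTheory.setIntegral_mono_on (hw1_int k t ht) (hint_u (φ k) t ht)
        measurableSet_Ioc (fun s hs => hw1_rearr_le k s hs.1)
    have h7 : maxf α (w1 k) t ≤ maxf α (u (φ k)) t := by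
      unfold maxf
      gcongr
    exact le_trans h7 (h2 (φ k) t ht)
  have hxs_tend : Tendsto xs atTop (𝓝 0) := by
    rcases hα with h1' | h1'
    · have hev : xs =ᶠ[atTop] (fun _ => (0:ℝ)) := by
        rw [Filter.EventuallyEq, Filter.eventually_atTop]
        exact ⟨1, fun t ht => rearr_zero_of_one_le h1' ht x⟩
      exact Tendsto.congr' hev.symm tendsto_const_nhds
    · exact hinf h1'
  have hg_tend : Tendsto g atTop (𝓝 0) := maxf_tendsto_zero hnjx hint_x hxs_tend
  have hsmall_g : ∀ ε : ℝ, 0 < ε → ∃ T : ℝ, 0 < T ∧ ∀ s ≥ T, g s < ε := by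
    intro ε hε
    obtain ⟨T0, hT0⟩ := (Filter.eventually_atTop).1 (hg_tend.eventually_lt_const hε)
    exact ⟨max T0 1, lt_of_lt_of_le one_pos (le_max_right _ _),
      fun s hs => hT0 s (le_trans (le_max_left _ _) hs)⟩
  have hw1_small : ∀ ε : ℝ, 0 < ε → ∃ T : ℝ, 0 < T ∧ ∀ k, ∀ s ≥ T, w1 k s < ε := by
    intro ε hε
    obtain ⟨T, hT, hTg⟩ := hsmall_g ε hε
    exact ⟨T, hT, fun k s hs => lt_of_le_of_lt
      (le_trans (hw1_le k s) (hdg (φ k) s (lt_of_lt_of_le hT hs))) (hTg s hs)⟩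
  have hw1_ae : ∀ᵐ t ∂(muI α), Tendsto (fun k => w1 k t) atTop (𝓝 0) := by
    apply muI_ae_of_pos_off_countable hJc
    intro t ht htJ
    have h8 : Tendsto (fun k => d (φ k) t - v t) atTop (𝓝 0) := by
      have h8' := (hgood t ht htJ).sub_const (v t)
      simpa using h8'
    have h9 := h8.max (tendsto_const_nhds (x := (0:ℝ)))
    simpa using h9
  have hw1_rtend := tendsto_rearr_of_tendsto_ae (fun k => (hw1_meas k).aemeasurable)
    (fun k s => hw1_nn k s) hw1_small hw1_ae
  have hNw1 : Tendsto (fun k => E.N (w1 k)) atTop (𝓝 0) :=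
    hKOC w1 hw1_mem hw1_HLP (muI_ae_of_pos (fun s hs => hw1_rtend s hs))
  -- Step E : N v = N x
  have hNd_le : ∀ k, E.N (d (φ k)) ≤ E.N (w1 k) + E.N v := by
    intro k
    have hb : ∀ᵐ s ∂(muI α), |d (φ k) s| ≤ |(w1 k + v) s| := by
      apply Filter.Eventually.of_forall
      intro s
      have heq : (w1 k + v) s = w1 k s + v s := rfl
      rw [heq, abs_of_nonneg (hd_nn _ _), abs_of_nonneg (add_nonneg (hw1_nn k s) (hv_nn s))]
      linarith [le_max_left (d (φ k) s - v s) 0]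
    calc E.N (d (φ k)) ≤ E.N (w1 k + v) :=
        (E.ideal (E.mem_aemeasurable (hdmem (φ k))) (E.add_mem (hw1_mem k) hv_mem) hb).2
      _ ≤ E.N (w1 k) + E.N v := E.norm_add_le _ _
  have hNx_le : E.N x ≤ E.N v := by
    have hA : Tendsto (fun k => E.N (d (φ k))) atTop (𝓝 (E.N x)) := by
      have heq : (fun k => E.N (d (φ k))) = fun k => E.N (u (φ k)) :=
        funext fun k => hdnorm (φ k)
      rw [heq]
      exact hNuφ
    have hBt : Tendsto (fun k => E.N (w1 k) + E.N v) atTop (𝓝 (0 + E.N v)) :=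
      hNw1.add tendsto_const_nhds
    rw [zero_add] at hBt
    exact le_of_tendsto_of_tendsto' hA hBt hNd_le
  have hNveq : E.N v = E.N x := le_antisymm hNv_le hNx_le
  -- Step F : identify v with xs via LKM
  have hnjv : NoJunk α v := noJunk_of_mem hα E hv_mem
  have hvv : ∀ t : ℝ, 0 < t → rearr α v t = v t :=
    rearr_eq_self hα hnjv hv_anti hv_nn hv_open hv_big
  have hv_HLP : HLP α v x := by
    intro t ht
    have hdint : ∀ k, (∫ s in Set.Ioc (0:ℝ) t, d (φ k) s) ≤ t * maxf α x t := by
      intro k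
      have h10 : maxf α (u (φ k)) t ≤ maxf α x t := h2 (φ k) t ht
      have h10' : (∫ s in Set.Ioc (0:ℝ) t, d (φ k) s) / t ≤ maxf α x t := h10
      calc (∫ s in Set.Ioc (0:ℝ) t, d (φ k) s)
          = ((∫ s in Set.Ioc (0:ℝ) t, d (φ k) s) / t) * t := by field_simp
        _ ≤ maxf α x t * t := mul_le_mul_of_nonneg_right h10' ht.le
        _ = t * maxf α x t := by ring
    have hlin : ∀ k, (∫⁻ s in Set.Ioc (0:ℝ) t, ENNReal.ofReal (d (φ k) s)) ≤
        ENNReal.ofReal (t * maxf α x t) := by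
      intro k
      rw [← MeasureTheory.ofReal_integral_eq_lintegral_ofReal (hint_u (φ k) t ht)
        (MeasureTheory.ae_restrict_of_ae (Filter.Eventually.of_forall (hd_nn (φ k))))]
      exact ENNReal.ofReal_le_ofReal (hdint k)
    have hwlin : ∀ m, (∫⁻ s in Set.Ioc (0:ℝ) t, ENNReal.ofReal (w m s)) ≤
        ENNReal.ofReal (t * maxf α x t) := by
      intro m
      calc (∫⁻ s in Set.Ioc (0:ℝ) t, ENNReal.ofReal (w m s))
          ≤ ∫⁻ s in Set.Ioc (0:ℝ) t, ENNReal.ofReal (d (φ m) s) := by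
            apply MeasureTheory.lintegral_mono
            intro s
            exact ENNReal.ofReal_le_ofReal (by simpa using hw_le m 0 s)
        _ ≤ _ := hlin m
    have hmeas' : ∀ m : ℕ, Measurable fun s => ENNReal.ofReal (w m s) :=
      fun m => (hw_meas m).ennreal_ofReal
    have hmono' : Monotone fun m : ℕ => fun s => ENNReal.ofReal (w m s) := by
      apply monotone_nat_of_le_succ
      intro m s
      exact ENNReal.ofReal_le_ofReal (hw_mono m s)
    have hswap := MeasureTheory.lintegral_iSup (μ := volume.restrict (Set.Ioc (0:ℝ) t))
      hmeas' hmono'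
    have hae' : ∀ᵐ s ∂(volume.restrict (Set.Ioc (0:ℝ) t)), (0 < s ∧ s ∉ J) := by
      rw [MeasureTheory.ae_restrict_iff' measurableSet_Ioc]
      rw [MeasureTheory.ae_iff]
      apply measure_mono_null _ (hJc.measure_zero volume)
      intro s hsbad
      simp only [Set.mem_setOf_eq, not_forall] at hsbad
      obtain ⟨hs1, hs2⟩ := hsbad
      rw [not_and_or] at hs2
      rcases hs2 with h' | h'
      · exact absurd hs1.1 h'
      · rwa [not_not] at h'
    have hcong : (∫⁻ s in Set.Ioc (0:ℝ) t, ENNReal.ofReal (v s)) =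
        ∫⁻ s in Set.Ioc (0:ℝ) t, (⨆ m, ENNReal.ofReal (w m s)) := by
      apply MeasureTheory.lintegral_congr_ae
      filter_upwards [hae'] with s hs
      have hmono'' : Monotone fun m : ℕ => ENNReal.ofReal (w m s) := by
        apply monotone_nat_of_le_succ
        intro m
        exact ENNReal.ofReal_le_ofReal (hw_mono m s)
      have ht1 : Tendsto (fun m => ENNReal.ofReal (w m s)) atTop
          (𝓝 (ENNReal.ofReal (v s))) :=
        (ENNReal.continuous_ofReal.tendsto _).comp (hw_tend s hs.1 hs.2)
      have ht2 : Tendsto (fun m => ENNReal.ofReal (w m s)) atTop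
          (𝓝 (⨆ m, ENNReal.ofReal (w m s))) := tendsto_atTop_iSup hmono''
      exact tendsto_nhds_unique ht1 ht2
    have hsup : (∫⁻ s in Set.Ioc (0:ℝ) t, ENNReal.ofReal (v s)) ≤
        ENNReal.ofReal (t * maxf α x t) := by
      rw [hcong, hswap]
      exact iSup_le hwlin
    have hv_int : MeasureTheory.IntegrableOn v (Set.Ioc (0:ℝ) t) volume := by
      refine ⟨hv_meas.aestronglyMeasurable, ?_⟩
      rw [MeasureTheory.hasFiniteIntegral_iff_ofReal
        (MeasureTheory.ae_restrict_of_ae (Filter.Eventually.of_forall hv_nn))]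
      exact lt_of_le_of_lt hsup ENNReal.ofReal_lt_top
    have hv_intle : (∫ s in Set.Ioc (0:ℝ) t, v s) ≤ t * maxf α x t := by
      have heq := MeasureTheory.ofReal_integral_eq_lintegral_ofReal hv_int
        (MeasureTheory.ae_restrict_of_ae (Filter.Eventually.of_forall hv_nn))
      have h11 : ENNReal.ofReal (∫ s in Set.Ioc (0:ℝ) t, v s) ≤
          ENNReal.ofReal (t * maxf α x t) := heq ▸ hsup
      exact (ENNReal.ofReal_le_ofReal_iff (mul_nonneg ht.le (hg_nn t))).1 h11
    have h12 : (∫ s in Set.Ioc (0:ℝ) t, rearr α v s) = ∫ s in Set.Ioc (0:ℝ) t, v s :=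
      MeasureTheory.setIntegral_congr_fun measurableSet_Ioc (fun s hs => hvv s hs.1)
    calc maxf α v t = (∫ s in Set.Ioc (0:ℝ) t, v s)/t := by unfold maxf; rw [h12]
      _ ≤ (t * maxf α x t)/t := by gcongr
      _ = maxf α x t := by field_simp
  have hrveq : rearr α v = rearr α x := by
    by_contra hne
    have hlt := hLKM v hv_mem hv_HLP hne
    rw [hNveq] at hlt
    exact lt_irrefl _ hlt
  have hvx : ∀ s : ℝ, 0 < s → v s = xs s := by
    intro s hs
    rw [← hvv s hs, hrveq]
  -- Step G : the deficit part tends to zero in norm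
  set w2 : ℕ → ℝ → ℝ := fun k t => max (xs t - d (φ k) t) 0 with hw2def
  have hw2_nn : ∀ k t, 0 ≤ w2 k t := fun k t => le_max_right _ _
  have hw2_le : ∀ k t, w2 k t ≤ xs t := by
    intro k t
    apply max_le _ (rearr_nonneg x t)
    linarith [hd_nn (φ k) t]
  have hw2_meas : ∀ k, Measurable (w2 k) :=
    fun k => ((measurable_rearr hnjx).sub (measurable_rearr (hnju (φ k)))).max measurable_const
  have hw2_mem : ∀ k, E.Mem (w2 k) := by
    intro k
    refine (E.ideal (hw2_meas k).aemeasurable hxs_mem ?_).1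
    apply Filter.Eventually.of_forall
    intro s
    rw [abs_of_nonneg (hw2_nn k s), abs_of_nonneg (rearr_nonneg x s)]
    exact hw2_le k s
  have hnjxs : NoJunk α xs := noJunk_of_mem hα E hxs_mem
  have hrearr_xs : rearr α xs = xs := rearr_rearr hα hnjx
  have hw2_rearr_le : ∀ k, ∀ s : ℝ, 0 < s → rearr α (w2 k) s ≤ xs s := by
    intro k s hs
    have h5 : rearr α (w2 k) s ≤ rearr α xs s := by
      apply rearr_mono_fn _ hnjxs hs
      apply Filter.Eventually.of_forall
      intro t
      rw [abs_of_nonneg (hw2_nn k t), abs_of_nonneg (rearr_nonneg x t)]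
      exact hw2_le k t
    rwa [hrearr_xs] at h5
  have hw2_int : ∀ k, ∀ t : ℝ, 0 < t →
      MeasureTheory.IntegrableOn (rearr α (w2 k)) (Set.Ioc 0 t) volume := by
    intro k t ht
    apply MeasureTheory.Integrable.mono' (hint_x t ht)
      (measurable_rearr (noJunk_of_mem hα E (hw2_mem k))).aestronglyMeasurable
    filter_upwards [MeasureTheory.ae_restrict_mem measurableSet_Ioc] with s hs
    rw [Real.norm_eq_abs, abs_of_nonneg (rearr_nonneg _ s)]
    exact hw2_rearr_le k s hs.1
  have hw2_HLP : ∀ k, HLP α (w2 k) x := by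
    intro k t ht
    have hle : (∫ s in Set.Ioc (0:ℝ) t, rearr α (w2 k) s) ≤
        ∫ s in Set.Ioc (0:ℝ) t, xs s :=
      MeasureTheory.setIntegral_mono_on (hw2_int k t ht) (hint_x t ht)
        measurableSet_Ioc (fun s hs => hw2_rearr_le k s hs.1)
    unfold maxf
    gcongr
  have hw2_small : ∀ ε : ℝ, 0 < ε → ∃ T : ℝ, 0 < T ∧ ∀ k, ∀ s ≥ T, w2 k s < ε := by
    intro ε hε
    obtain ⟨T, hT, hTg⟩ := hsmall_g ε hε
    exact ⟨T, hT, fun k s hs => lt_of_le_of_lt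
      (le_trans (hw2_le k s) (hxsg s (lt_of_lt_of_le hT hs))) (hTg s hs)⟩
  have hw2_ae : ∀ᵐ t ∂(muI α), Tendsto (fun k => w2 k t) atTop (𝓝 0) := by
    apply muI_ae_of_pos_off_countable hJc
    intro t ht htJ
    have h8 : Tendsto (fun k => xs t - d (φ k) t) atTop (𝓝 0) := by
      have h8' := (hgood t ht htJ).const_sub (xs t)
      have hz : xs t - v t = 0 := by rw [hvx t ht]; ring
      rw [hz] at h8'
      exact h8'
    have h9 := h8.max (tendsto_const_nhds (x := (0:ℝ)))
    simpa using h9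
  have hw2_rtend := tendsto_rearr_of_tendsto_ae (fun k => (hw2_meas k).aemeasurable)
    (fun k s => hw2_nn k s) hw2_small hw2_ae
  have hNw2 : Tendsto (fun k => E.N (w2 k)) atTop (𝓝 0) :=
    hKOC w2 hw2_mem hw2_HLP (muI_ae_of_pos (fun s hs => hw2_rtend s hs))
  -- Step H : conclusion
  refine ⟨φ, hφ, ?_⟩
  have hfinal : ∀ k, E.N (rearr α (u (φ k)) - rearr α x) ≤ E.N (w1 k) + E.N (w2 k) := by
    intro k
    have hb : ∀ᵐ s ∂(muI α), |(rearr α (u (φ k)) - rearr α x) s| ≤ |(w1 k + w2 k) s| := by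
      apply muI_ae_of_pos
      intro s hs
      have heq1 : (rearr α (u (φ k)) - rearr α x) s = d (φ k) s - xs s := rfl
      have heq2 : (w1 k + w2 k) s = w1 k s + w2 k s := rfl
      rw [heq1, heq2, abs_of_nonneg (add_nonneg (hw1_nn k s) (hw2_nn k s))]
      have hv_eq : v s = xs s := hvx s hs
      have hw1s : w1 k s = max (d (φ k) s - xs s) 0 := by
        show max (d (φ k) s - v s) 0 = _
        rw [hv_eq]
      have hw2s : w2 k s = max (xs s - d (φ k) s) 0 := rfl
      rw [hw1s, hw2s]
      rcases le_total (d (φ k) s) (xs s) with h' | h'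
      · rw [abs_of_nonpos (by linarith), max_eq_right (by linarith),
          max_eq_left (by linarith)]
        linarith
      · rw [abs_of_nonneg (by linarith), max_eq_left (by linarith),
          max_eq_right (by linarith)]
        linarith
    have haem : AEMeasurable (rearr α (u (φ k)) - rearr α x) (muI α) :=
      ((measurable_rearr (hnju (φ k))).sub (measurable_rearr hnjx)).aemeasurable
    calc E.N (rearr α (u (φ k)) - rearr α x) ≤ E.N (w1 k + w2 k) :=
        (E.ideal haem (E.add_mem (hw1_mem k) (hw2_mem k)) hb).2
      _ ≤ E.N (w1 k) + E.N (w2 k) := E.norm_add_le _ _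
  have hsum : Tendsto (fun k => E.N (w1 k) + E.N (w2 k)) atTop (𝓝 0) := by
    have := hNw1.add hNw2
    simpa using this
  exact squeeze_zero (fun k => E.norm_nonneg' _) hfinal hsum





end KPf
/-- If `x ∈ E` is a point of `K`-order continuity and an `LKM` point with
`x*(∞) = 0`, then `x` is an `LLUKM` point. -/
theorem koc_and_lkm_point_implies_llukm_point (α : ℝ≥0∞) (hα : α = 1 ∨ α = ∞)
    (E : SymmetricBFS α) (x : ℝ → ℝ) (hx : E.Mem x)
    (hKOC : E.IsKOCPoint x) (hLKM : E.IsLKMPoint x)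
    (hinf : rearrInftyZero α x) :
    E.IsLLUKMPoint x := by
  intro u h1 h2 h3
  apply Filter.tendsto_of_subseq_tendsto
  intro ns hns
  obtain ⟨φ, hφ, htend⟩ := KPf.core hα E hx hKOC hLKM hinf (fun n => u (ns n))
    (fun n => h1 (ns n)) (fun n => h2 (ns n)) (h3.comp hns)
  exact ⟨φ, htend⟩
end
end

section
/- In the space E=L^∞ on I=[0,∞) with the essential supremum norm, the function x=χ_[0,∞) is a ULUKM point, but x is not an H_g point (witnessed by y_n=χ_(1/n,∞), which converge to x in measure with ‖y_n‖_∞=‖x‖_∞=1 while ‖x−y_n‖_∞=1 for all n). -/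
open MeasureTheory Filter Topology Set
open scoped ENNReal

noncomputable section

variable {α : ℝ≥0∞}

/-- The norm of `L^∞` on `I = [0,∞)`. -/
def LinfN (x : ℝ → ℝ) : ℝ := (eLpNorm x ⊤ (muI ∞)).toReal

/-- The function `x = χ_{[0,∞)}`. -/
def xLinf : ℝ → ℝ := Set.indicator (Set.Ici (0 : ℝ)) fun _ => (1 : ℝ)

/-- The witness sequence `y_n = χ_{(1/n,∞)}`. -/
def yLinf : ℕ → ℝ → ℝ := fun n => Set.indicator (Set.Ioi (1 / (n : ℝ))) fun _ => (1 : ℝ)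

-- Auxiliary lemmas

lemma muI_top : muI ∞ = volume.restrict (Set.Ici 0) := by
  unfold muI
  congr 1
  ext s
  simp [ENNReal.ofReal_lt_top]

lemma abs_xLinf_le (s : ℝ) : |xLinf s| ≤ 1 := by
  unfold xLinf
  rw [Set.indicator_apply]
  split <;> norm_num

lemma distr_xLinf_of_lt {lam : ℝ} (h : lam < 1) : distr ∞ xLinf lam = ∞ := by
  unfold distr
  rw [muI_top]
  have hsub : Set.Ici (0:ℝ) ⊆ {s | lam < |xLinf s|} := by
    intro s hs
    simp only [Set.mem_setOf_eq, xLinf, Set.indicator_of_mem hs]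
    simpa using h
  have h1 : (volume.restrict (Set.Ici (0:ℝ))) (Set.Ici 0) = ∞ := by
    rw [Measure.restrict_apply measurableSet_Ici]
    simp [Real.volume_Ici]
  exact top_le_iff.mp (h1 ▸ measure_mono hsub)

lemma distr_xLinf_of_ge {lam : ℝ} (h : 1 ≤ lam) : distr ∞ xLinf lam = 0 := by
  unfold distr
  have : {s : ℝ | lam < |xLinf s|} = ∅ := by
    ext s
    simp only [Set.mem_setOf_eq, Set.mem_empty_iff_false, iff_false, not_lt]
    exact (abs_xLinf_le s).trans h
  rw [this]
  simp

lemma rearr_top_xLinf : rearr ∞ xLinf = fun _ => (1:ℝ) := by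
  funext t
  unfold rearr
  have hset : {lam : ℝ | 0 < lam ∧ distr ∞ xLinf lam ≤ ENNReal.ofReal t} = Set.Ici 1 := by
    ext lam
    simp only [Set.mem_setOf_eq, Set.mem_Ici]
    constructor
    · rintro ⟨hpos, hd⟩
      by_contra hlt
      push_neg at hlt
      rw [distr_xLinf_of_lt hlt] at hd
      exact (lt_irrefl _ (lt_of_le_of_lt hd ENNReal.ofReal_lt_top)).elim
    · intro h1
      exact ⟨lt_of_lt_of_le one_pos h1, by rw [distr_xLinf_of_ge h1]; exact zero_le⟩
  rw [hset, csInf_Ici]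

lemma maxf_xLinf {t : ℝ} (ht : 0 < t) : maxf ∞ xLinf t = 1 := by
  unfold maxf
  rw [rearr_top_xLinf, setIntegral_const, Real.volume_real_Ioc_of_le ht.le]
  simp [ENNReal.toReal_ofReal ht.le, div_self ht.ne']

section memtop
variable {u : ℝ → ℝ}

lemma ae_abs_le_LinfN (hu : MemLp u ⊤ (muI ∞)) : ∀ᵐ s ∂(muI ∞), |u s| ≤ LinfN u := by
  have hfin : eLpNorm u ⊤ (muI ∞) ≠ ∞ := hu.2.ne
  filter_upwards [ae_le_eLpNormEssSup (f := u) (μ := muI ∞)] with s hs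
  have h2 : ((‖u s‖₊ : ℝ≥0∞)).toReal ≤ (eLpNormEssSup u (muI ∞)).toReal :=
    ENNReal.toReal_mono (by rw [← eLpNorm_exponent_top]; exact hfin) hs
  simpa [LinfN, eLpNorm_exponent_top, Real.norm_eq_abs] using h2

lemma distr_eq_zero (hu : MemLp u ⊤ (muI ∞)) {lam : ℝ} (h : LinfN u ≤ lam) : distr ∞ u lam = 0 := by
  unfold distr
  have hnull : muI ∞ {s | ¬ (|u s| ≤ LinfN u)} = 0 := by
    rw [← ae_iff]
    exact ae_abs_le_LinfN hu
  refine measure_mono_null ?_ hnull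
  intro s hs
  simp only [Set.mem_setOf_eq] at hs ⊢
  exact not_le.mpr (lt_of_le_of_lt h hs)

lemma LinfN_nonneg (x : ℝ → ℝ) : 0 ≤ LinfN x := ENNReal.toReal_nonneg

lemma mem_rearr_set (hu : MemLp u ⊤ (muI ∞)) {lam t : ℝ} (h : LinfN u < lam) :
    lam ∈ {lam : ℝ | 0 < lam ∧ distr ∞ u lam ≤ ENNReal.ofReal t} :=
  ⟨lt_of_le_of_lt (LinfN_nonneg u) h, by rw [distr_eq_zero hu h.le]; exact zero_le⟩

lemma rearr_nonneg (α : ℝ≥0∞) (x : ℝ → ℝ) (t : ℝ) : 0 ≤ rearr α x t :=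
  Real.sInf_nonneg fun _ hx => hx.1.le

lemma rearr_le (hu : MemLp u ⊤ (muI ∞)) (t : ℝ) : rearr ∞ u t ≤ LinfN u := by
  refine le_of_forall_pos_le_add fun ε hε => ?_
  exact csInf_le ⟨0, fun x hx => hx.1.le⟩ (mem_rearr_set hu (by linarith))

lemma rearr_antitone (hu : MemLp u ⊤ (muI ∞)) : Antitone (rearr ∞ u) := by
  intro t1 t2 h
  refine csInf_le_csInf ⟨0, fun x hx => hx.1.le⟩
    ⟨LinfN u + 1, mem_rearr_set hu (by linarith)⟩ ?_
  rintro lam ⟨h1, h2⟩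
  exact ⟨h1, h2.trans (ENNReal.ofReal_le_ofReal h)⟩

lemma rearr_integrableOn (hu : MemLp u ⊤ (muI ∞)) {a b : ℝ} : IntegrableOn (rearr ∞ u) (Set.Ioc a b) volume := by
  refine Integrable.mono' (g := fun _ => LinfN u)
    ((integrableOn_const_iff (C := LinfN u)).2 (Or.inr measure_Ioc_lt_top)) ?_ ?_
  · exact ((rearr_antitone hu).measurable).aestronglyMeasurable
  · refine Filter.Eventually.of_forall fun s => ?_
    rw [Real.norm_eq_abs, abs_le]
    exact ⟨by linarith [rearr_nonneg ∞ u s, LinfN_nonneg u], rearr_le hu s⟩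

lemma rearr_ge_one (hu : MemLp u ⊤ (muI ∞)) (hhlp : HLP ∞ xLinf u) {s : ℝ} (hs : 0 < s) : 1 ≤ rearr ∞ u s := by
  set c := LinfN u with hc
  by_contra h
  push_neg at h
  set a := rearr ∞ u s with ha
  have hint : ∀ t : ℝ, 0 < t → t ≤ ∫ x in Set.Ioc (0:ℝ) t, rearr ∞ u x := by
    intro t ht
    have h1 : (1:ℝ) ≤ maxf ∞ u t := (maxf_xLinf ht) ▸ hhlp t ht
    unfold maxf at h1
    calc t = 1 * t := (one_mul t).symm
    _ ≤ _ := (le_div_iff₀ ht).mp h1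
  set t := max (s+1) (((c - a) * s) / (1 - a) + 1) with htdef
  have hst : s < t := lt_of_lt_of_le (by linarith) (le_max_left _ _)
  have ht0 : 0 < t := hs.trans hst
  have hsplit : ∫ x in Set.Ioc (0:ℝ) t, rearr ∞ u x
      = (∫ x in Set.Ioc (0:ℝ) s, rearr ∞ u x) + ∫ x in Set.Ioc s t, rearr ∞ u x := by
    rw [← setIntegral_union (Set.Ioc_disjoint_Ioc_of_le le_rfl) measurableSet_Ioc
      (rearr_integrableOn hu) (rearr_integrableOn hu),
      Set.Ioc_union_Ioc_eq_Ioc hs.le hst.le]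
  have hconst : ∀ d p q : ℝ, p ≤ q → (∫ _x in Set.Ioc p q, d) = d * (q - p) := by
    intro d p q hpq
    rw [setIntegral_const, Real.volume_real_Ioc_of_le hpq, smul_eq_mul]
    ring
  have hB1 : (∫ x in Set.Ioc (0:ℝ) s, rearr ∞ u x) ≤ c * s := by
    have h1 : (∫ x in Set.Ioc (0:ℝ) s, rearr ∞ u x) ≤ ∫ _x in Set.Ioc (0:ℝ) s, c :=
      setIntegral_mono (rearr_integrableOn hu)
        ((integrableOn_const_iff (C := c)).2 (Or.inr measure_Ioc_lt_top))
        (fun x => rearr_le hu x)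
    rw [hconst c 0 s hs.le] at h1
    linarith
  have hB2 : (∫ x in Set.Ioc s t, rearr ∞ u x) ≤ a * (t - s) := by
    have h1 : (∫ x in Set.Ioc s t, rearr ∞ u x) ≤ ∫ _x in Set.Ioc s t, a :=
      setIntegral_mono_on (rearr_integrableOn hu)
        ((integrableOn_const_iff (C := a)).2 (Or.inr measure_Ioc_lt_top)) measurableSet_Ioc
        (fun x hx => rearr_antitone hu hx.1.le)
    rw [hconst a s t hst.le] at h1
    linarith
  have hkey : t ≤ c * s + a * (t - s) := by
    calc t ≤ ∫ x in Set.Ioc (0:ℝ) t, rearr ∞ u x := hint t ht0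
    _ = _ := hsplit
    _ ≤ c * s + a * (t - s) := add_le_add hB1 hB2
  have h1a : (0:ℝ) < 1 - a := by linarith
  have ht2 : ((c - a) * s) / (1 - a) + 1 ≤ t := le_max_right _ _
  have hdm : (((c - a) * s) / (1 - a)) * (1 - a) = (c - a) * s := div_mul_cancel₀ _ h1a.ne'
  nlinarith
end memtop


lemma muI_singleton_zero : muI ∞ ({0} : Set ℝ) = 0 := by
  rw [muI_top, Measure.restrict_apply (measurableSet_singleton 0)]
  exact measure_mono_null Set.inter_subset_left Real.volume_singleton

lemma ae_pos : ∀ᵐ s ∂(muI ∞), 0 < s := by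
  have h1 : ∀ᵐ s ∂(muI ∞), s ∈ Set.Ici (0:ℝ) := by
    rw [muI_top]; exact ae_restrict_mem measurableSet_Ici
  have h2 : ∀ᵐ s ∂(muI ∞), s ≠ 0 := by
    rw [ae_iff]
    refine measure_mono_null ?_ muI_singleton_zero
    intro s hs
    simp only [Set.mem_setOf_eq, not_not] at hs
    simpa using hs
  filter_upwards [h1, h2] with s hs1 hs2
  exact lt_of_le_of_ne hs1 (Ne.symm hs2)

lemma LinfN_indicator_one {B : Set ℝ} (h0 : volume (B ∩ Set.Ici 0) ≠ 0) :
    LinfN (Set.indicator B fun _ => (1:ℝ)) = 1 := by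
  set f := Set.indicator B fun _ => (1:ℝ) with hf
  have hle : eLpNorm f ⊤ (muI ∞) ≤ 1 := by
    rw [eLpNorm_exponent_top]
    have h := eLpNormEssSup_le_of_ae_bound (μ := muI ∞) (f := f) (C := 1)
      (Filter.Eventually.of_forall fun s => by
        classical
        rw [Real.norm_eq_abs, hf, Set.indicator_apply]
        split <;> norm_num)
    simpa using h
  have hge : (1:ℝ≥0∞) ≤ eLpNorm f ⊤ (muI ∞) := by
    by_contra h
    push_neg at h
    rw [eLpNorm_exponent_top] at h
    have hnull : muI ∞ {s | ¬ ((‖f s‖₊ : ℝ≥0∞) ≤ eLpNormEssSup f (muI ∞))} = 0 := by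
      rw [← ae_iff]
      exact ae_le_eLpNormEssSup
    have hsub : B ∩ Set.Ici 0 ⊆
        {s | ¬ ((‖f s‖₊ : ℝ≥0∞) ≤ eLpNormEssSup f (muI ∞))} := by
      intro s hs
      have hfs : f s = 1 := Set.indicator_of_mem hs.1 _
      simp only [Set.mem_setOf_eq, not_le, hfs]
      simpa using h
    have hz : muI ∞ (B ∩ Set.Ici 0) = 0 := measure_mono_null hsub hnull
    rw [muI_top, Measure.restrict_apply' measurableSet_Ici, Set.inter_assoc,
      Set.inter_self] at hz
    exact h0 hz
  have heq : eLpNorm f ⊤ (muI ∞) = 1 := le_antisymm hle hge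
  rw [LinfN, heq]
  simp

lemma LinfN_xLinf : LinfN xLinf = 1 := by
  have : xLinf = Set.indicator (Set.Ici (0:ℝ)) fun _ => (1:ℝ) := rfl
  rw [this]
  apply LinfN_indicator_one
  rw [Set.inter_self]
  simp [Real.volume_Ici]

lemma LinfN_yLinf (n : ℕ) : LinfN (yLinf n) = 1 := by
  apply LinfN_indicator_one
  have h1 : Set.Ioi (1/(n:ℝ)) ∩ Set.Ici 0 = Set.Ioi (1/(n:ℝ)) :=
    Set.inter_eq_left.mpr fun s hs =>
      le_of_lt (lt_of_le_of_lt (by positivity : (0:ℝ) ≤ 1/(n:ℝ)) hs)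
  rw [h1]
  simp [Real.volume_Ioi]

lemma sub_eq_indicator (n : ℕ) :
    xLinf - yLinf n = Set.indicator (Set.Icc 0 (1/(n:ℝ))) fun _ => (1:ℝ) := by
  funext s
  have hn : (0:ℝ) ≤ 1/(n:ℝ) := by positivity
  simp only [Pi.sub_apply, xLinf, yLinf]
  rcases lt_or_ge s 0 with h | h
  · have e1 : s ∉ Set.Ici (0:ℝ) := by simp [h.not_ge]
    have e2 : s ∉ Set.Ioi (1/(n:ℝ)) := by
      simp only [Set.mem_Ioi, not_lt]; linarith
    have e3 : s ∉ Set.Icc (0:ℝ) (1/(n:ℝ)) := by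
      simp only [Set.mem_Icc, not_and]; intro h0; linarith
    rw [Set.indicator_of_notMem e1, Set.indicator_of_notMem e2,
      Set.indicator_of_notMem e3]
    norm_num
  · rcases le_or_gt s (1/(n:ℝ)) with h2 | h2
    · rw [Set.indicator_of_mem (Set.mem_Ici.mpr h),
        Set.indicator_of_notMem (by simpa using h2.not_gt),
        Set.indicator_of_mem (Set.mem_Icc.mpr ⟨h, h2⟩)]
      norm_num
    · rw [Set.indicator_of_mem (Set.mem_Ici.mpr h),
        Set.indicator_of_mem (Set.mem_Ioi.mpr h2),
        Set.indicator_of_notMem (by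
          simp only [Set.mem_Icc, not_and, not_le]; intro _; exact h2)]
      norm_num

lemma LinfN_sub_yLinf (n : ℕ) (hn : 1 ≤ n) : LinfN (xLinf - yLinf n) = 1 := by
  rw [sub_eq_indicator]
  apply LinfN_indicator_one
  have h1 : Set.Icc (0:ℝ) (1/(n:ℝ)) ∩ Set.Ici 0 = Set.Icc 0 (1/(n:ℝ)) :=
    Set.inter_eq_left.mpr fun s hs => hs.1
  have hpos : (0:ℝ) < 1/(n:ℝ) := by
    have : (0:ℝ) < n := by exact_mod_cast hn
    positivity
  rw [h1, Real.volume_Icc]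
  simp only [ne_eq, ENNReal.ofReal_eq_zero, not_le]
  linarith

lemma yLinf_tim : TendstoInMeasure (muI ∞) yLinf atTop xLinf := by
  intro ε hε
  have hb : ∀ n : ℕ, muI ∞ {s | ε ≤ edist (yLinf n s) (xLinf s)}
      ≤ ENNReal.ofReal (1/(n:ℝ)) := by
    intro n
    rw [muI_top, Measure.restrict_apply' measurableSet_Ici]
    have hsub : {s | ε ≤ edist (yLinf n s) (xLinf s)} ∩ Set.Ici 0
        ⊆ Set.Icc 0 (1/(n:ℝ)) := by
      rintro s ⟨hs1, hs2⟩
      refine ⟨hs2, ?_⟩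
      by_contra hcon
      push_neg at hcon
      have hy : yLinf n s = 1 := Set.indicator_of_mem hcon _
      have hx : xLinf s = 1 := Set.indicator_of_mem hs2 _
      rw [Set.mem_setOf_eq, hy, hx, edist_self] at hs1
      exact absurd hs1 (not_le.mpr hε)
    refine le_trans (measure_mono hsub) (le_of_eq ?_)
    rw [Real.volume_Icc, sub_zero]
  refine tendsto_of_tendsto_of_tendsto_of_le_of_le tendsto_const_nhds ?_
    (fun n => zero_le) hb
  have h := ENNReal.tendsto_ofReal (tendsto_one_div_atTop_nhds_zero_nat)
  simpa using h


/-- In `E = L^∞` on `I = [0,∞)`, the function `x = χ_{[0,∞)}` is a `ULUKM`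
point but not an `H_g` point, witnessed by `y_n = χ_{(1/n,∞)}`: the `y_n` converge to `x`
in measure with `‖y_n‖_∞ = ‖x‖_∞ = 1`, while `‖x − y_n‖_∞ = 1` for all `n ≥ 1`. -/
theorem linf_ulukm_point_not_hg_point :
    (∀ u : ℕ → ℝ → ℝ, (∀ n, MemLp (u n) ⊤ (muI ∞)) →
        (∀ n, HLP ∞ xLinf (u n)) →
        Tendsto (fun n => LinfN (u n)) atTop (𝓝 (LinfN xLinf)) →
        Tendsto (fun n => LinfN (rearr ∞ xLinf - rearr ∞ (u n))) atTop (𝓝 0)) ∧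
    ¬ (∀ u : ℕ → ℝ → ℝ, (∀ n, MemLp (u n) ⊤ (muI ∞)) →
        TendstoInMeasure (muI ∞) u atTop xLinf →
        Tendsto (fun n => LinfN (u n)) atTop (𝓝 (LinfN xLinf)) →
        Tendsto (fun n => LinfN (u n - xLinf)) atTop (𝓝 0)) ∧
    TendstoInMeasure (muI ∞) yLinf atTop xLinf ∧
    (∀ n : ℕ, 1 ≤ n → LinfN (yLinf n) = 1) ∧
    LinfN xLinf = 1 ∧
    (∀ n : ℕ, 1 ≤ n → LinfN (xLinf - yLinf n) = 1) := by
  refine ⟨?_, ?_, yLinf_tim, fun n _ => LinfN_yLinf n, LinfN_xLinf,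
    fun n hn => LinfN_sub_yLinf n hn⟩
  · -- ULUKM part
    intro u hmem hhlp hnorm
    rw [LinfN_xLinf] at hnorm
    have hub : ∀ n, LinfN (rearr ∞ xLinf - rearr ∞ (u n)) ≤ LinfN (u n) - 1 := by
      intro n
      have hc1 : 1 ≤ LinfN (u n) :=
        le_trans (rearr_ge_one (hmem n) (hhlp n) one_pos) (rearr_le (hmem n) 1)
      have hbound : eLpNorm (rearr ∞ xLinf - rearr ∞ (u n)) ⊤ (muI ∞)
          ≤ ENNReal.ofReal (LinfN (u n) - 1) := by
        rw [eLpNorm_exponent_top]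
        apply eLpNormEssSup_le_of_ae_bound (C := LinfN (u n) - 1)
        filter_upwards [ae_pos] with s hs
        have h1 : rearr ∞ xLinf s = 1 := congrFun rearr_top_xLinf s
        have h2 := rearr_ge_one (hmem n) (hhlp n) hs
        have h3 := rearr_le (hmem n) s
        rw [Pi.sub_apply, h1, Real.norm_eq_abs, abs_le]
        constructor <;> linarith
      calc LinfN (rearr ∞ xLinf - rearr ∞ (u n))
          ≤ (ENNReal.ofReal (LinfN (u n) - 1)).toReal :=
        ENNReal.toReal_mono ENNReal.ofReal_ne_top hbound
      _ = LinfN (u n) - 1 := ENNReal.toReal_ofReal (by linarith)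
    refine squeeze_zero (fun n => ENNReal.toReal_nonneg) hub ?_
    simpa using hnorm.sub_const 1
  · -- not an H_g point
    intro H
    have hmem : ∀ n, MemLp (yLinf n) ⊤ (muI ∞) := by
      intro n
      refine memLp_top_of_bound
        ((measurable_const.indicator measurableSet_Ioi).aestronglyMeasurable) 1
        (Filter.Eventually.of_forall fun s => ?_)
      classical
      rw [Real.norm_eq_abs]
      unfold yLinf
      rw [Set.indicator_apply]
      split <;> norm_num
    have hnorm : Tendsto (fun n => LinfN (yLinf n)) atTop (𝓝 (LinfN xLinf)) := by
      have heq : (fun n => LinfN (yLinf n)) = fun _ => (1:ℝ) := funext LinfN_yLinf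
      rw [heq, LinfN_xLinf]
      exact tendsto_const_nhds
    have hconc := H yLinf hmem yLinf_tim hnorm
    have heq1 : ∀ n : ℕ, 1 ≤ n → LinfN (yLinf n - xLinf) = 1 := by
      intro n hn
      have hneg : yLinf n - xLinf = -(xLinf - yLinf n) := (neg_sub _ _).symm
      rw [hneg, LinfN, eLpNorm_neg, ← LinfN, LinfN_sub_yLinf n hn]
    have hone : Tendsto (fun n => LinfN (yLinf n - xLinf)) atTop (𝓝 1) := by
      refine Tendsto.congr' ?_ (tendsto_const_nhds (x := (1:ℝ)))
      filter_upwards [eventually_ge_atTop 1] with n hn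
      exact (heq1 n hn).symm
    exact one_ne_zero (tendsto_nhds_unique hone hconc)
end
end
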